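/- arXiv:2007.12859 — 6 statements merged into one kernel-verified Lean document; each statement's English description precedes it below -/
import Mathlib

section
/- With H as in the previous setup, E[|H|²] = φ_1² a⁴ + (1/n)(1 − φ_1² a⁴). Consequently, the average SNR of the legitimate link, γ̄_b = n² γ_{0,b} E[|H|²] = n² γ_{0,b}[φ_1² a⁴ + (1 − φ_1² a⁴)/n], scales as n² when φ_1 a² > 0. -/
open MeasureTheory Real Set ProbabilityTheory Filter

/-- Second moment of the equivalent legitimate channel: `E[|H|²] = φ₁²a⁴ + (1−φ₁²a⁴)/n`;
consequently the average legitimate SNR `γ̄_b = n² γ₀b E[|H|²]` equals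
`n² γ₀b [φ₁²a⁴ + (1−φ₁²a⁴)/n]` and scales as `n²` (that is, `γ̄_b/n² → γ₀b φ₁²a⁴`)
when `φ₁ a² > 0`. -/
theorem legitimate_channel_power_scaling
    {Ω : Type*} [MeasurableSpace Ω] (μ : Measure Ω) [IsProbabilityMeasure μ]
    (n : ℕ) (hn : 0 < n) (B Θ : Fin n → Ω → ℝ) (a φ₁ φ₂ γ₀b : ℝ)
    (hγ₀b : 0 < γ₀b) (hφa : 0 < φ₁ * a ^ 2)
    (hB : ∀ i, Measurable (B i)) (hΘ : ∀ i, Measurable (Θ i))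
    (hBpos : ∀ i ω, 0 ≤ B i ω)
    (hBint : ∀ i, Integrable (B i) μ)
    (hB2int : ∀ i, Integrable (fun ω => (B i ω) ^ 2) μ)
    (hBmean : ∀ i, ∫ ω, B i ω ∂μ = a ^ 2)
    (hB2 : ∀ i, ∫ ω, (B i ω) ^ 2 ∂μ = 1)
    (hφ₁ : ∀ i, ∫ ω, Real.cos (Θ i ω) ∂μ = φ₁)
    (hφ₂ : ∀ i, ∫ ω, Real.cos (2 * Θ i ω) ∂μ = φ₂)
    (hsin1 : ∀ i, ∫ ω, Real.sin (Θ i ω) ∂μ = 0)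
    (hsin2 : ∀ i, ∫ ω, Real.sin (2 * Θ i ω) ∂μ = 0)
    (hBΘindep : ∀ i, IndepFun (B i) (Θ i) μ)
    (hiid : iIndepFun (fun i ω => (B i ω, Θ i ω)) μ)
    (H : Ω → ℂ)
    (hH : H = fun ω => (n : ℂ)⁻¹ * ∑ i, (B i ω : ℂ) *
      Complex.exp (Complex.I * (Θ i ω : ℂ))) :
    (∫ ω, ‖H ω‖ ^ 2 ∂μ = φ₁ ^ 2 * a ^ 4 + (1 - φ₁ ^ 2 * a ^ 4) / n) ∧
      (n : ℝ) ^ 2 * γ₀b * ∫ ω, ‖H ω‖ ^ 2 ∂μ =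
        (n : ℝ) ^ 2 * γ₀b * (φ₁ ^ 2 * a ^ 4 + (1 - φ₁ ^ 2 * a ^ 4) / n) ∧
      Tendsto (fun m : ℕ =>
          ((m : ℝ) ^ 2 * γ₀b * (φ₁ ^ 2 * a ^ 4 + (1 - φ₁ ^ 2 * a ^ 4) / m)) / (m : ℝ) ^ 2)
        atTop (nhds (γ₀b * (φ₁ ^ 2 * a ^ 4))) := by
  have hn' : (n : ℝ) ≠ 0 := Nat.cast_ne_zero.mpr hn.ne'
  -- X and Y are the real and imaginary parts of each summand
  have hXmeas : ∀ i, Measurable (fun ω => B i ω * Real.cos (Θ i ω)) :=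
    fun i => (hB i).mul (Real.measurable_cos.comp (hΘ i))
  have hYmeas : ∀ i, Measurable (fun ω => B i ω * Real.sin (Θ i ω)) :=
    fun i => (hB i).mul (Real.measurable_sin.comp (hΘ i))
  have hXint : ∀ i, Integrable (fun ω => B i ω * Real.cos (Θ i ω)) μ := by
    intro i
    have := (hBint i).bdd_mul (Real.measurable_cos.comp (hΘ i)).aestronglyMeasurable
      (Eventually.of_forall (fun ω => by simpa using Real.abs_cos_le_one (Θ i ω)) : ∀ᵐ ω ∂μ, ‖Real.cos (Θ i ω)‖ ≤ 1)
    simpa [mul_comm] using this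
  have hYint : ∀ i, Integrable (fun ω => B i ω * Real.sin (Θ i ω)) μ := by
    intro i
    have := (hBint i).bdd_mul (Real.measurable_sin.comp (hΘ i)).aestronglyMeasurable
      (Eventually.of_forall (fun ω => by simpa using Real.abs_sin_le_one (Θ i ω)) : ∀ᵐ ω ∂μ, ‖Real.sin (Θ i ω)‖ ≤ 1)
    simpa [mul_comm] using this
  have hXmean : ∀ i, ∫ ω, B i ω * Real.cos (Θ i ω) ∂μ = a ^ 2 * φ₁ := by
    intro i
    have hind : IndepFun (B i) (fun ω => Real.cos (Θ i ω)) μ :=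
      (hBΘindep i).comp measurable_id Real.measurable_cos
    have := hind.integral_mul_eq_mul_integral (hB i).aestronglyMeasurable
      (Real.measurable_cos.comp (hΘ i)).aestronglyMeasurable
    simpa [Pi.mul_apply, hBmean i, hφ₁ i] using this
  have hYmean : ∀ i, ∫ ω, B i ω * Real.sin (Θ i ω) ∂μ = 0 := by
    intro i
    have hind : IndepFun (B i) (fun ω => Real.sin (Θ i ω)) μ :=
      (hBΘindep i).comp measurable_id Real.measurable_sin
    have := hind.integral_mul_eq_mul_integral (hB i).aestronglyMeasurable
      (Real.measurable_sin.comp (hΘ i)).aestronglyMeasurable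
    simpa [Pi.mul_apply, hBmean i, hsin1 i] using this
  -- independence across distinct indices
  have hindXX : ∀ i j, i ≠ j → IndepFun (fun ω => B i ω * Real.cos (Θ i ω))
      (fun ω => B j ω * Real.cos (Θ j ω)) μ := by
    intro i j hij
    exact (hiid.indepFun hij).comp
      (measurable_fst.mul (Real.measurable_cos.comp measurable_snd))
      (measurable_fst.mul (Real.measurable_cos.comp measurable_snd))
  have hindYY : ∀ i j, i ≠ j → IndepFun (fun ω => B i ω * Real.sin (Θ i ω))
      (fun ω => B j ω * Real.sin (Θ j ω)) μ := by
    intro i j hij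
    exact (hiid.indepFun hij).comp
      (measurable_fst.mul (Real.measurable_sin.comp measurable_snd))
      (measurable_fst.mul (Real.measurable_sin.comp measurable_snd))
  -- the per-pair integrand
  have hTint : ∀ i j, Integrable (fun ω =>
      (B i ω * Real.cos (Θ i ω)) * (B j ω * Real.cos (Θ j ω)) +
      (B i ω * Real.sin (Θ i ω)) * (B j ω * Real.sin (Θ j ω))) μ := by
    intro i j
    by_cases hij : i = j
    · subst hij
      have heq : (fun ω =>
          (B i ω * Real.cos (Θ i ω)) * (B i ω * Real.cos (Θ i ω)) +
          (B i ω * Real.sin (Θ i ω)) * (B i ω * Real.sin (Θ i ω)))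
          = fun ω => (B i ω) ^ 2 := by
        funext ω
        have := Real.sin_sq_add_cos_sq (Θ i ω)
        nlinarith [this]
      rw [heq]; exact hB2int i
    · have hint1 : Integrable (fun ω => B i ω * Real.cos (Θ i ω) * (B j ω * Real.cos (Θ j ω))) μ :=
        (hindXX i j hij).integrable_mul (hXint i) (hXint j)
      have hint2 : Integrable (fun ω => B i ω * Real.sin (Θ i ω) * (B j ω * Real.sin (Θ j ω))) μ :=
        (hindYY i j hij).integrable_mul (hYint i) (hYint j)
      exact hint1.add hint2
  have hTval : ∀ i j, (∫ ω,
      (B i ω * Real.cos (Θ i ω)) * (B j ω * Real.cos (Θ j ω)) +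
      (B i ω * Real.sin (Θ i ω)) * (B j ω * Real.sin (Θ j ω)) ∂μ)
      = if i = j then 1 else φ₁ ^ 2 * a ^ 4 := by
    intro i j
    by_cases hij : i = j
    · subst hij
      simp only [if_true]
      have heq : (fun ω =>
          (B i ω * Real.cos (Θ i ω)) * (B i ω * Real.cos (Θ i ω)) +
          (B i ω * Real.sin (Θ i ω)) * (B i ω * Real.sin (Θ i ω)))
          = fun ω => (B i ω) ^ 2 := by
        funext ω
        have := Real.sin_sq_add_cos_sq (Θ i ω)
        nlinarith [this]
      rw [integral_congr_ae (Filter.EventuallyEq.of_eq heq), hB2 i]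
    · simp only [hij, if_false]
      have hint1 : Integrable (fun ω => B i ω * Real.cos (Θ i ω) * (B j ω * Real.cos (Θ j ω))) μ :=
        (hindXX i j hij).integrable_mul (hXint i) (hXint j)
      have hint2 : Integrable (fun ω => B i ω * Real.sin (Θ i ω) * (B j ω * Real.sin (Θ j ω))) μ :=
        (hindYY i j hij).integrable_mul (hYint i) (hYint j)
      rw [integral_add hint1 hint2]
      have h1 : ∫ ω, B i ω * Real.cos (Θ i ω) * (B j ω * Real.cos (Θ j ω)) ∂μ
          = (∫ ω, B i ω * Real.cos (Θ i ω) ∂μ) * ∫ ω, B j ω * Real.cos (Θ j ω) ∂μ :=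
        (hindXX i j hij).integral_fun_mul_eq_mul_integral (hXmeas i).aestronglyMeasurable
          (hXmeas j).aestronglyMeasurable
      have h2 : ∫ ω, B i ω * Real.sin (Θ i ω) * (B j ω * Real.sin (Θ j ω)) ∂μ
          = (∫ ω, B i ω * Real.sin (Θ i ω) ∂μ) * ∫ ω, B j ω * Real.sin (Θ j ω) ∂μ :=
        (hindYY i j hij).integral_fun_mul_eq_mul_integral (hYmeas i).aestronglyMeasurable
          (hYmeas j).aestronglyMeasurable
      rw [h1, h2, hXmean i, hXmean j, hYmean i, hYmean j]
      ring
  -- pointwise formula for |H|²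
  have hpoint : ∀ ω, ‖H ω‖ ^ 2 =
      ((n : ℝ) ^ 2)⁻¹ * ((∑ i, B i ω * Real.cos (Θ i ω)) ^ 2 +
        (∑ i, B i ω * Real.sin (Θ i ω)) ^ 2) := by
    intro ω
    have hsum : (∑ i, (B i ω : ℂ) * Complex.exp (Complex.I * (Θ i ω : ℂ)))
        = ((∑ i, B i ω * Real.cos (Θ i ω) : ℝ) : ℂ)
          + ((∑ i, B i ω * Real.sin (Θ i ω) : ℝ) : ℂ) * Complex.I := by
      push_cast
      rw [Finset.sum_mul, ← Finset.sum_add_distrib]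
      refine Finset.sum_congr rfl fun i _ => ?_
      rw [mul_comm Complex.I, Complex.exp_mul_I]
      push_cast [Complex.ofReal_cos, Complex.ofReal_sin]
      ring
    rw [hH]
    simp only
    rw [hsum, norm_mul, norm_inv, Complex.norm_natCast, mul_pow, inv_pow,
      Complex.sq_norm, Complex.normSq_add_mul_I]
  -- the integral computation
  have key : ∫ ω, ‖H ω‖ ^ 2 ∂μ
      = φ₁ ^ 2 * a ^ 4 + (1 - φ₁ ^ 2 * a ^ 4) / n := by
    have hexp : ∀ ω, ‖H ω‖ ^ 2 = ((n : ℝ) ^ 2)⁻¹ *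
        ∑ i, ∑ j, ((B i ω * Real.cos (Θ i ω)) * (B j ω * Real.cos (Θ j ω)) +
          (B i ω * Real.sin (Θ i ω)) * (B j ω * Real.sin (Θ j ω))) := by
      intro ω
      rw [hpoint ω]
      congr 1
      rw [pow_two, pow_two, Finset.sum_mul_sum, Finset.sum_mul_sum,
        ← Finset.sum_add_distrib]
      exact Finset.sum_congr rfl fun i _ => (Finset.sum_add_distrib).symm
    calc ∫ ω, ‖H ω‖ ^ 2 ∂μ
        = ∫ ω, ((n : ℝ) ^ 2)⁻¹ *
            ∑ i, ∑ j, ((B i ω * Real.cos (Θ i ω)) * (B j ω * Real.cos (Θ j ω)) +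
              (B i ω * Real.sin (Θ i ω)) * (B j ω * Real.sin (Θ j ω))) ∂μ :=
          integral_congr_ae (Filter.EventuallyEq.of_eq (funext hexp))
      _ = ((n : ℝ) ^ 2)⁻¹ * ∑ i, ∑ j, ∫ ω,
            ((B i ω * Real.cos (Θ i ω)) * (B j ω * Real.cos (Θ j ω)) +
              (B i ω * Real.sin (Θ i ω)) * (B j ω * Real.sin (Θ j ω))) ∂μ := by
          rw [integral_const_mul,
            integral_finset_sum _ (fun i _ => integrable_finset_sum _ (fun j _ => hTint i j))]
          congr 1
          exact Finset.sum_congr rfl fun i _ => integral_finset_sum _ fun j _ => hTint i j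
      _ = ((n : ℝ) ^ 2)⁻¹ * ∑ i : Fin n, ∑ j : Fin n,
            (if i = j then (1 : ℝ) else φ₁ ^ 2 * a ^ 4) := by
          simp_rw [hTval]
      _ = φ₁ ^ 2 * a ^ 4 + (1 - φ₁ ^ 2 * a ^ 4) / n := by
          have h1 : ∀ i : Fin n, ∑ j : Fin n, (if i = j then (1 : ℝ) else φ₁ ^ 2 * a ^ 4)
              = n * (φ₁ ^ 2 * a ^ 4) + (1 - φ₁ ^ 2 * a ^ 4) := by
            intro i
            have h2 : ∀ j : Fin n, (if i = j then (1 : ℝ) else φ₁ ^ 2 * a ^ 4)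
                = φ₁ ^ 2 * a ^ 4 + (if i = j then (1 - φ₁ ^ 2 * a ^ 4) else 0) := by
              intro j; by_cases h : i = j <;> simp [h]
            simp_rw [h2, Finset.sum_add_distrib, Finset.sum_const, Finset.sum_ite_eq,
              Finset.card_univ, Fintype.card_fin]
            simp [nsmul_eq_mul]
          simp_rw [h1, Finset.sum_const, Finset.card_univ, Fintype.card_fin, nsmul_eq_mul]
          field_simp
  refine ⟨key, by rw [key], ?_⟩
  have hlim : Tendsto (fun m : ℕ => γ₀b * (φ₁ ^ 2 * a ^ 4) + γ₀b * (1 - φ₁ ^ 2 * a ^ 4) / m)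
      atTop (nhds (γ₀b * (φ₁ ^ 2 * a ^ 4))) := by
    have h0 := tendsto_const_div_atTop_nhds_zero_nat (γ₀b * (1 - φ₁ ^ 2 * a ^ 4))
    simpa using tendsto_const_nhds.add h0
  refine Tendsto.congr' ?_ hlim
  filter_upwards [eventually_ge_atTop 1] with m hm
  have hm' : (m : ℝ) ≠ 0 := Nat.cast_ne_zero.mpr (by omega)
  field_simp
end

section
/- Let γ_b ~ Gamma with shape m > 0 and mean γ̄_b (Nakagami-m legitimate link) and γ_e ~ Exponential with mean γ̄_e, independent, and τ = 2^{R_S} > 1. Then the secrecy outage probability equals γ̃(m, (τ−1)m/γ̄_b) + e^{(τ−1)/(τγ̄_e)} · Γ̃(m, (τ−1)(m/γ̄_b + 1/(τγ̄_e))) / (1 + γ̄_b/(m τ γ̄_e))^m, where γ̃ and Γ̃ denote the regularized lower and upper incomplete gamma functions. -/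
open MeasureTheory Real Set ProbabilityTheory
open scoped ENNReal NNReal

/-- Regularized lower incomplete gamma function `γ̃(s, x) = γ(s,x)/Γ(s)`. -/
noncomputable def regLowerIncGamma (s x : ℝ) : ℝ :=
  (∫ t in (0)..x, t ^ (s - 1) * Real.exp (-t)) / Real.Gamma s

/-- Regularized upper incomplete gamma function `Γ̃(s, x) = Γ(s,x)/Γ(s)`. -/
noncomputable def regUpperIncGamma (s x : ℝ) : ℝ :=
  (∫ t in Ioi x, t ^ (s - 1) * Real.exp (-t)) / Real.Gamma s

lemma aux_expMeasure_Ioi {r : ℝ} (hr : 0 < r) (t : ℝ) :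
    expMeasure r (Ioi t) = ENNReal.ofReal (Real.exp (-(r * max t 0))) := by
  have : IsProbabilityMeasure (expMeasure r) := isProbabilityMeasure_expMeasure hr
  have hIic : expMeasure r (Iic t) = ENNReal.ofReal (if 0 ≤ t then 1 - exp (-(r*t)) else 0) := by
    rw [← cdf_expMeasure_eq hr, cdf_eq_real, measureReal_def,
      ENNReal.ofReal_toReal (measure_ne_top _ _)]
  have hcompl : Ioi t = (Iic t)ᶜ := by simp
  rw [hcompl, measure_compl measurableSet_Iic (measure_ne_top _ _), measure_univ, hIic]
  rcases le_or_gt 0 t with h | h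
  · rw [if_pos h, max_eq_left h]
    have h1 : rexp (-(r*t)) ≤ 1 := exp_le_one_iff.mpr (by nlinarith)
    rw [ENNReal.sub_eq_of_eq_add (by simp)]
    rw [← ENNReal.ofReal_add (by positivity) (by linarith), ← ENNReal.ofReal_one]
    ring_nf
  · rw [if_neg (not_le.mpr h), max_eq_right h.le]
    simp

/-- Closed-form secrecy outage probability for a Nakagami-`m` (gamma) legitimate link and
a Rayleigh (exponential) eavesdropper link. -/
theorem secrecy_outage_gamma_exponential
    {Ω : Type*} [MeasurableSpace Ω] (μ : Measure Ω) [IsProbabilityMeasure μ]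
    (γb γe : Ω → ℝ) (m gbar gebar Rs τ : ℝ)
    (hm : 0 < m) (hgbar : 0 < gbar) (hgebar : 0 < gebar) (hRs : 0 < Rs)
    (hτ : τ = (2 : ℝ) ^ Rs)
    (hγb : Measurable γb) (hγe : Measurable γe)
    (hγbdist : μ.map γb = gammaMeasure m (m / gbar))
    (hγedist : μ.map γe = expMeasure (1 / gebar))
    (hindep : IndepFun γb γe μ) :
    (μ {ω | Real.logb 2 (1 + γb ω) - Real.logb 2 (1 + γe ω) < Rs}).toReal =
      regLowerIncGamma m ((τ - 1) * m / gbar) +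
        Real.exp ((τ - 1) / (τ * gebar)) *
          regUpperIncGamma m ((τ - 1) * (m / gbar + 1 / (τ * gebar))) /
          (1 + gbar / (m * τ * gebar)) ^ m := by
  have hτ1 : 1 < τ := by
    rw [hτ]; exact (Real.one_lt_rpow_iff_of_pos (by norm_num)).mpr (Or.inl ⟨one_lt_two, hRs⟩)
  have hτ0 : 0 < τ := by linarith
  have ha : (0:ℝ) < τ - 1 := by linarith
  set lb : ℝ := m / gbar with hlbdef
  set lev : ℝ := 1 / gebar with hlevdef
  have hlb : 0 < lb := by positivity
  have hlev : 0 < lev := by positivity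
  set c : ℝ := lb + lev / τ with hcdef
  have hc : 0 < c := by positivity
  -- a.e. nonnegativity
  have hb0 : ∀ᵐ ω ∂μ, 0 ≤ γb ω := by
    rw [ae_iff]
    have h1 : {ω | ¬ 0 ≤ γb ω} = γb ⁻¹' (Iio 0) := by ext ω; simp [not_le]
    rw [h1, ← Measure.map_apply hγb measurableSet_Iio, hγbdist]
    simp only [gammaMeasure]
    rw [withDensity_apply _ measurableSet_Iio, lintegral_gammaPDF_of_nonpos le_rfl]
  have he0 : ∀ᵐ ω ∂μ, 0 ≤ γe ω := by
    rw [ae_iff]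
    have h1 : {ω | ¬ 0 ≤ γe ω} = γe ⁻¹' (Iio 0) := by ext ω; simp [not_le]
    rw [h1, ← Measure.map_apply hγe measurableSet_Iio, hγedist]
    simp only [expMeasure, gammaMeasure]
    rw [withDensity_apply _ measurableSet_Iio, lintegral_gammaPDF_of_nonpos le_rfl]
  -- event rewriting
  have hset : μ {ω | Real.logb 2 (1 + γb ω) - Real.logb 2 (1 + γe ω) < Rs}
      = μ {ω | γb ω < τ * γe ω + (τ - 1)} := by
    apply measure_congr
    rw [Filter.eventuallyEq_set]
    filter_upwards [hb0, he0] with ω hbω heω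
    have h1 : (0:ℝ) < 1 + γb ω := by linarith
    have h2 : (0:ℝ) < 1 + γe ω := by linarith
    rw [sub_lt_iff_lt_add]
    have h3 : Rs + Real.logb 2 (1 + γe ω) = Real.logb 2 (τ * (1 + γe ω)) := by
      rw [Real.logb_mul (by positivity) h2.ne', hτ,
        Real.logb_rpow (by norm_num) (by norm_num)]
    rw [h3, Real.logb_lt_logb_iff one_lt_two h1 (by positivity)]
    constructor <;> intro h <;> nlinarith
  -- independence / product measure
  have hS : MeasurableSet {p : ℝ × ℝ | p.1 < τ * p.2 + (τ - 1)} :=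
    measurableSet_lt measurable_fst ((measurable_snd.const_mul τ).add_const _)
  have hmap := (ProbabilityTheory.indepFun_iff_map_prod_eq_prod_map_map
    hγb.aemeasurable hγe.aemeasurable).mp hindep
  have hjoint : μ {ω | γb ω < τ * γe ω + (τ - 1)}
      = ((gammaMeasure m lb).prod (expMeasure lev)) {p : ℝ × ℝ | p.1 < τ * p.2 + (τ - 1)} := by
    rw [← hγbdist, ← hγedist, ← hmap, Measure.map_apply (hγb.prodMk hγe) hS]
    rfl
  -- Fubini over sections
  have hsec : ∀ x : ℝ, (Prod.mk x ⁻¹' {p : ℝ × ℝ | p.1 < τ * p.2 + (τ - 1)})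
      = Ioi ((x - (τ - 1)) / τ) := by
    intro x
    ext y
    simp only [mem_preimage, mem_setOf_eq, mem_Ioi, div_lt_iff₀ hτ0]
    constructor <;> intro h <;> nlinarith
  set G : ℝ → ℝ≥0∞ := fun x => ENNReal.ofReal (rexp (-(lev * max ((x - (τ - 1)) / τ) 0))) with hGdef
  have hprod : ((gammaMeasure m lb).prod (expMeasure lev)) {p : ℝ × ℝ | p.1 < τ * p.2 + (τ - 1)}
      = ∫⁻ x, G x ∂(gammaMeasure m lb) := by
    have : IsProbabilityMeasure (expMeasure lev) := isProbabilityMeasure_expMeasure hlev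
    rw [Measure.prod_apply hS]
    refine lintegral_congr fun x => ?_
    rw [hsec x, aux_expMeasure_Ioi hlev]
  have hGmeas : Measurable G :=
    ((((measurable_id.sub_const (τ-1)).div_const τ).max measurable_const).const_mul
      lev).neg.exp.ennreal_ofReal
  have hpdfmeas : Measurable (gammaPDF m lb) := (measurable_gammaPDFReal m lb).ennreal_ofReal
  have hlin : ∫⁻ x, G x ∂(gammaMeasure m lb) = ∫⁻ x, gammaPDF m lb x * G x := by
    simp only [gammaMeasure]
    rw [lintegral_withDensity_eq_lintegral_mul volume hpdfmeas hGmeas]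
    rfl
  -- split
  set A : ℝ≥0∞ := ∫⁻ x in Iic (τ-1), gammaPDF m lb x * G x with hAdef
  set B : ℝ≥0∞ := ∫⁻ x in Ioi (τ-1), gammaPDF m lb x * G x with hBdef
  have hsplit : ∫⁻ x, gammaPDF m lb x * G x = A + B := by
    rw [hAdef, hBdef, ← compl_Iic, lintegral_add_compl _ measurableSet_Iic]
  have hμeq : μ {ω | Real.logb 2 (1 + γb ω) - Real.logb 2 (1 + γe ω) < Rs} = A + B := by
    rw [hset, hjoint, hprod, hlin, hsplit]
  have hABfin := ENNReal.add_ne_top.mp (hμeq ▸ measure_ne_top μ _)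
  rw [hμeq, ENNReal.toReal_add hABfin.1 hABfin.2]
  have hA : A.toReal = regLowerIncGamma m ((τ - 1) * m / gbar) := by
    have h1 : A = ∫⁻ x in Ioc 0 (τ-1), gammaPDF m lb x := by
      rw [hAdef]
      have h1' : ∫⁻ x in Iic (τ-1), gammaPDF m lb x * G x
          = ∫⁻ x in Iic (τ-1), gammaPDF m lb x := by
        refine setLIntegral_congr_fun_ae measurableSet_Iic (ae_of_all _ fun x hx => ?_)
        have hx' : x ≤ τ - 1 := hx
        have hm0 : max ((x - (τ - 1)) / τ) 0 = 0 :=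
          max_eq_right (div_nonpos_iff.mpr (Or.inr ⟨by linarith, hτ0.le⟩))
        simp only [hGdef, hm0, mul_zero, neg_zero, Real.exp_zero, ENNReal.ofReal_one, mul_one]
      rw [h1', lintegral_Iic_eq_lintegral_Iio_add_Icc _ ha.le,
        lintegral_gammaPDF_of_nonpos le_rfl, zero_add]
      exact (setLIntegral_congr Ioc_ae_eq_Icc).symm
    have h3 : A.toReal = ∫ x in Ioc 0 (τ-1), gammaPDFReal m lb x := by
      rw [h1]
      rw [integral_eq_lintegral_of_nonneg_ae (ae_of_all _ fun x => gammaPDFReal_nonneg hm hlb x)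
        ((measurable_gammaPDFReal m lb).aestronglyMeasurable.restrict)]
      rfl
    have hne : lb ^ (m-1) ≠ 0 := (Real.rpow_pos_of_pos hlb _).ne'
    have h5 : ∫ x in (0:ℝ)..(τ-1), gammaPDFReal m lb x
        = ∫ x in (0:ℝ)..(τ-1),
            (lb ^ m / Real.Gamma m * (lb ^ (m-1))⁻¹) * ((fun u => u ^ (m-1) * rexp (-u)) (lb * x)) := by
      refine intervalIntegral.integral_congr fun x hx => ?_
      rw [uIcc_of_le ha.le] at hx
      have hx0 : 0 ≤ x := hx.1
      simp only [gammaPDFReal, if_pos hx0]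
      rw [Real.mul_rpow hlb.le hx0]
      field_simp
    have h6 : ∫ x in (0:ℝ)..(τ-1), ((fun u => u ^ (m-1) * rexp (-u)) (lb * x))
        = lb⁻¹ • ∫ u in (lb*0)..(lb*(τ-1)), u ^ (m-1) * rexp (-u) :=
      intervalIntegral.integral_comp_mul_left (fun u => u ^ (m-1) * rexp (-u)) hlb.ne'
    have hconst : lb ^ m * (lb ^ (m-1))⁻¹ * lb⁻¹ = 1 := by
      rw [show lb ^ m = lb ^ (m-1) * lb by
        rw [← Real.rpow_add_one hlb.ne' (m-1)]; ring_nf]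
      field_simp
    have harg : lb * (τ - 1) = (τ - 1) * m / gbar := by rw [hlbdef]; ring
    rw [h3, ← intervalIntegral.integral_of_le ha.le, h5,
      intervalIntegral.integral_const_mul, h6, mul_zero, smul_eq_mul, harg, regLowerIncGamma]
    have : lb ^ m / Real.Gamma m * (lb ^ (m-1))⁻¹ * (lb⁻¹ * (∫ u in (0:ℝ)..((τ-1)*m/gbar), u ^ (m-1) * rexp (-u)))
        = (lb ^ m * (lb ^ (m-1))⁻¹ * lb⁻¹) * (∫ u in (0:ℝ)..((τ-1)*m/gbar), u ^ (m-1) * rexp (-u)) / Real.Gamma m := by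
      ring
    rw [this, hconst, one_mul]
  have hB : B.toReal = Real.exp ((τ - 1) / (τ * gebar)) *
      regUpperIncGamma m ((τ - 1) * (m / gbar + 1 / (τ * gebar))) /
      (1 + gbar / (m * τ * gebar)) ^ m := by
    have hcm1 : (0:ℝ) < c ^ (m-1) := Real.rpow_pos_of_pos hc _
    have hcm : (0:ℝ) < c ^ m := Real.rpow_pos_of_pos hc _
    have hlbm : (0:ℝ) < lb ^ m := Real.rpow_pos_of_pos hlb _
    have hG0 : (0:ℝ) < Real.Gamma m := Real.Gamma_pos_of_pos hm
    have hB' : B = ∫⁻ x in Ioi (τ-1),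
        ENNReal.ofReal (gammaPDFReal m lb x * rexp (-(lev * ((x - (τ-1))/τ)))) := by
      rw [hBdef]
      refine setLIntegral_congr_fun_ae measurableSet_Ioi (ae_of_all _ fun x hx => ?_)
      have hx' : τ - 1 < x := hx
      have hm0 : max ((x - (τ - 1)) / τ) 0 = (x - (τ-1))/τ :=
        max_eq_left (div_nonneg (by linarith) hτ0.le)
      simp only [hGdef, hm0, gammaPDF]
      rw [← ENNReal.ofReal_mul (gammaPDFReal_nonneg hm hlb x)]
    have hmeas2 : Measurable fun x => gammaPDFReal m lb x * rexp (-(lev * ((x - (τ-1))/τ))) :=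
      (measurable_gammaPDFReal m lb).mul
        ((((measurable_id.sub_const (τ-1)).div_const τ).const_mul lev).neg.exp)
    have h3 : B.toReal = ∫ x in Ioi (τ-1), gammaPDFReal m lb x * rexp (-(lev * ((x - (τ-1))/τ))) := by
      rw [hB']
      rw [integral_eq_lintegral_of_nonneg_ae
        (ae_of_all _ fun x => mul_nonneg (gammaPDFReal_nonneg hm hlb x) (Real.exp_nonneg _))
        hmeas2.aestronglyMeasurable.restrict]
    set D : ℝ := lb ^ m / Real.Gamma m * (c ^ (m-1))⁻¹ * rexp (lev * (τ-1) / τ) with hD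
    have h4 : ∫ x in Ioi (τ-1), gammaPDFReal m lb x * rexp (-(lev * ((x - (τ-1))/τ)))
        = ∫ x in Ioi (τ-1), D * ((fun u => u ^ (m-1) * rexp (-u)) (c * x)) := by
      refine setIntegral_congr_fun measurableSet_Ioi fun x hx => ?_
      have hx' : τ - 1 < x := hx
      have hx0 : 0 ≤ x := by linarith
      simp only [gammaPDFReal, if_pos hx0, hD]
      rw [Real.mul_rpow hc.le hx0]
      have hexp : rexp (-(lb*x)) * rexp (-(lev * ((x - (τ-1))/τ)))
          = rexp (lev*(τ-1)/τ) * rexp (-(c*x)) := by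
        rw [← Real.exp_add, ← Real.exp_add]
        congr 1
        rw [hcdef]
        field_simp
        ring
      rw [show lb ^ m / Real.Gamma m * x ^ (m - 1) * rexp (-(lb * x)) * rexp (-(lev * ((x - (τ - 1)) / τ)))
          = lb ^ m / Real.Gamma m * x ^ (m-1) * (rexp (-(lb*x)) * rexp (-(lev * ((x - (τ - 1)) / τ)))) from by ring,
        hexp]
      field_simp
    have h5 : ∫ x in Ioi (τ-1), D * ((fun u => u ^ (m-1) * rexp (-u)) (c * x))
        = D * (c⁻¹ * ∫ u in Ioi (c * (τ-1)), u ^ (m-1) * rexp (-u)) := by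
      rw [integral_const_mul, integral_comp_mul_left_Ioi (fun u => u ^ (m-1) * rexp (-u)) _ hc,
        smul_eq_mul]
    have hcarg : c * (τ-1) = (τ - 1) * (m / gbar + 1 / (τ * gebar)) := by
      rw [hcdef, hlbdef, hlevdef]
      field_simp
    have hcl : 1 + gbar / (m * τ * gebar) = c / lb := by
      rw [hcdef, hlbdef, hlevdef]
      field_simp
    have hK : lev * (τ-1) / τ = (τ-1)/(τ*gebar) := by
      rw [hlevdef]; ring
    have hpow : c ^ (m-1) * c = c ^ m := by
      rw [← Real.rpow_add_one hc.ne' (m-1)]; ring_nf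
    rw [h3, h4, h5, hcarg, hD, hK, regUpperIncGamma, hcl,
      Real.div_rpow hc.le hlb.le]
    set J : ℝ := ∫ u in Ioi ((τ - 1) * (m / gbar + 1 / (τ * gebar))), u ^ (m-1) * rexp (-u) with hJ
    rw [div_div_eq_mul_div]
    have hinv : (c ^ (m-1))⁻¹ * c⁻¹ = (c ^ m)⁻¹ := by rw [← mul_inv, hpow]
    rw [show lb ^ m / Real.Gamma m * (c ^ (m - 1))⁻¹ * rexp ((τ - 1) / (τ * gebar)) * (c⁻¹ * J)
        = ((c ^ (m-1))⁻¹ * c⁻¹) * (lb ^ m / Real.Gamma m * rexp ((τ - 1) / (τ * gebar)) * J)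
      from by ring, hinv]
    ring
  rw [hA, hB]
end

section
/- Let γ_b and γ_e be independent nonnegative random variables with CDFs F_b, F_e, with γ_e ~ Exponential(mean γ̄_e). Then the average secrecy capacity E[max{log₂(1+γ_b) − log₂(1+γ_e), 0}] equals E[log₂(1+γ_b)] − (1/ln 2) ∫₀^∞ (1 − F_e(x))(1 − F_b(x))/(1+x) dx, and the integral term L(γ̄_b, γ̄_e) = (1/ln 2) ∫₀^∞ (1 − F_e(x))(1 − F_b(x))/(1+x) dx is nonnegative. -/
open MeasureTheory Real Set ProbabilityTheory

lemma log_integral_one_add {x : ℝ} (hx : 0 ≤ x) :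
    ∫ t in (0:ℝ)..x, (1 + t)⁻¹ = Real.log (1 + x) := by
  have h1 : (fun t : ℝ => (1 + t)⁻¹) = fun t : ℝ => (t + 1)⁻¹ := by
    funext t; rw [add_comm]
  rw [h1, intervalIntegral.integral_comp_add_right (fun u : ℝ => u⁻¹) 1,
    integral_inv (by rw [Set.uIcc_of_le (by linarith)]; intro h; simp at h; linarith [h.1]),
    zero_add, div_one, add_comm]

lemma tail_toReal {Ω : Type*} [MeasurableSpace Ω] (μ : Measure Ω) [IsProbabilityMeasure μ]
    (γ : Ω → ℝ) (hγ : Measurable γ) (x : ℝ) :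
    1 - (μ {ω | γ ω ≤ x}).toReal = (μ {ω | x < γ ω}).toReal := by
  have hs : MeasurableSet {ω | γ ω ≤ x} := hγ measurableSet_Iic
  have hc : {ω | γ ω ≤ x}ᶜ = {ω | x < γ ω} := by ext ω; simp [not_le]
  have h := measure_add_measure_compl (μ := μ) hs
  rw [hc, measure_univ] at h
  have h2 := congrArg ENNReal.toReal h
  rw [ENNReal.toReal_add (measure_ne_top μ _) (measure_ne_top μ _)] at h2
  simp at h2
  linarith

lemma layer_log {Ω : Type*} [MeasurableSpace Ω] (μ : Measure Ω) [IsProbabilityMeasure μ]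
    (Z : Ω → ℝ) (hZ : Measurable Z) (hZ0 : ∀ ω, 0 ≤ Z ω)
    (hm : AEStronglyMeasurable (fun x => (μ {ω | x < Z ω}).toReal / (1 + x))
      (volume.restrict (Ioi 0))) :
    ∫ ω, Real.log (1 + Z ω) ∂μ = ∫ x in Ioi (0:ℝ), (μ {ω | x < Z ω}).toReal / (1 + x) := by
  have g_intble : ∀ t > (0:ℝ), IntervalIntegrable (fun s : ℝ => (1 + s)⁻¹) volume 0 t := by
    intro t ht
    apply ContinuousOn.intervalIntegrable
    apply ContinuousOn.inv₀ (by fun_prop)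
    intro x hx
    rw [Set.uIcc_of_le ht.le] at hx
    have := hx.1; positivity
  have g_nn : ∀ᵐ t ∂volume.restrict (Ioi (0:ℝ)), 0 ≤ (1 + t)⁻¹ := by
    filter_upwards [ae_restrict_mem measurableSet_Ioi] with t ht
    have : (0:ℝ) < t := ht
    positivity
  have key := lintegral_comp_eq_lintegral_meas_lt_mul μ
    (Filter.Eventually.of_forall hZ0) hZ.aemeasurable g_intble g_nn
  have hL : ∫ ω, Real.log (1 + Z ω) ∂μ
      = (∫⁻ ω, ENNReal.ofReal (Real.log (1 + Z ω)) ∂μ).toReal := by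
    rw [integral_eq_lintegral_of_nonneg_ae
      (Filter.Eventually.of_forall fun ω => Real.log_nonneg (by linarith [hZ0 ω]))
      ((show Measurable (fun ω => Real.log (1 + Z ω)) from
        Real.measurable_log.comp (measurable_const.add hZ)).aestronglyMeasurable)]
  have hR : ∫ x in Ioi (0:ℝ), (μ {ω | x < Z ω}).toReal / (1 + x)
      = (∫⁻ x in Ioi (0:ℝ), (μ {ω | x < Z ω}) * ENNReal.ofReal (1 + x)⁻¹).toReal := by
    rw [integral_eq_lintegral_of_nonneg_ae
      (by filter_upwards [ae_restrict_mem measurableSet_Ioi] with x hx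
          have : (0:ℝ) < x := hx
          positivity) hm]
    congr 1
    apply setLIntegral_congr_fun measurableSet_Ioi
    intro x hx
    beta_reduce
    rw [div_eq_mul_inv, ENNReal.ofReal_mul ENNReal.toReal_nonneg,
      ENNReal.ofReal_toReal (measure_ne_top μ _)]
  rw [hL, hR]
  congr 1
  rw [← key]
  apply lintegral_congr fun ω => ?_
  rw [log_integral_one_add (hZ0 ω)]

/-- Average secrecy capacity decomposition: for independent nonnegative SNRs with
`γ_e` exponential, `E[max{log₂(1+γ_b) − log₂(1+γ_e), 0}]` equals the average legitimate
capacity minus the nonnegative ASC loss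
`L = (1/ln 2) ∫₀^∞ (1−F_e(x))(1−F_b(x))/(1+x) dx`. -/
theorem asc_decomposition
    {Ω : Type*} [MeasurableSpace Ω] (μ : Measure Ω) [IsProbabilityMeasure μ]
    (γb γe : Ω → ℝ) (gebar : ℝ) (hgebar : 0 < gebar)
    (hγb : Measurable γb) (hγe : Measurable γe)
    (hγbpos : ∀ ω, 0 ≤ γb ω) (hγepos : ∀ ω, 0 ≤ γe ω)
    (hγedist : μ.map γe = expMeasure (1 / gebar))
    (hindep : IndepFun γb γe μ)
    (hintb : Integrable (fun ω => Real.logb 2 (1 + γb ω)) μ)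
    (hintL : IntegrableOn
      (fun x => (1 - (μ {ω | γe ω ≤ x}).toReal) * (1 - (μ {ω | γb ω ≤ x}).toReal) /
        (1 + x)) (Ioi 0) volume) :
    (∫ ω, max (Real.logb 2 (1 + γb ω) - Real.logb 2 (1 + γe ω)) 0 ∂μ =
      (∫ ω, Real.logb 2 (1 + γb ω) ∂μ) -
        (1 / Real.log 2) * ∫ x in Ioi (0 : ℝ),
          (1 - (μ {ω | γe ω ≤ x}).toReal) * (1 - (μ {ω | γb ω ≤ x}).toReal) /
            (1 + x)) ∧
      0 ≤ (1 / Real.log 2) * ∫ x in Ioi (0 : ℝ),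
          (1 - (μ {ω | γe ω ≤ x}).toReal) * (1 - (μ {ω | γb ω ≤ x}).toReal) /
            (1 + x) := by
  set Z : Ω → ℝ := fun ω => min (γb ω) (γe ω) with hZdef
  have hZ : Measurable Z := hγb.min hγe
  have hZ0 : ∀ ω, 0 ≤ Z ω := fun ω => le_min (hγbpos ω) (hγepos ω)
  -- pointwise equality of the target function with the tail function
  have hFeq : (fun x : ℝ =>
      (1 - (μ {ω | γe ω ≤ x}).toReal) * (1 - (μ {ω | γb ω ≤ x}).toReal) / (1 + x))
      = fun x : ℝ => (μ {ω | x < Z ω}).toReal / (1 + x) := by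
    funext x
    rw [tail_toReal μ γe hγe x, tail_toReal μ γb hγb x]
    have hset : {ω | x < Z ω} = γb ⁻¹' (Ioi x) ∩ γe ⁻¹' (Ioi x) := by
      ext ω; simp [hZdef, lt_min_iff]
    rw [hset, hindep.measure_inter_preimage_eq_mul (Ioi x) (Ioi x)
      measurableSet_Ioi measurableSet_Ioi, ENNReal.toReal_mul]
    have hb' : γb ⁻¹' Ioi x = {ω | x < γb ω} := rfl
    have he' : γe ⁻¹' Ioi x = {ω | x < γe ω} := rfl
    rw [hb', he']
    ring
  -- integrability of logb 2 (1 + Z)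
  have hZle : ∀ ω, Real.logb 2 (1 + Z ω) ≤ Real.logb 2 (1 + γb ω) := by
    intro ω
    apply Real.logb_le_logb_of_le one_lt_two (by linarith [hZ0 ω])
    have := min_le_left (γb ω) (γe ω)
    simp only [hZdef]
    linarith
  have hZnn : ∀ ω, 0 ≤ Real.logb 2 (1 + Z ω) := fun ω =>
    Real.logb_nonneg one_lt_two (by linarith [hZ0 ω])
  have hmeaslogbZ : Measurable (fun ω => Real.logb 2 (1 + Z ω)) := by
    simp only [Real.logb]
    exact (Real.measurable_log.comp (measurable_const.add hZ)).div_const _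
  have hintZ : Integrable (fun ω => Real.logb 2 (1 + Z ω)) μ := by
    refine hintb.mono hmeaslogbZ.aestronglyMeasurable ?_
    apply Filter.Eventually.of_forall
    intro ω
    rw [Real.norm_eq_abs, Real.norm_eq_abs, abs_of_nonneg (hZnn ω)]
    exact le_trans (hZle ω) (le_abs_self _)
  -- max identity
  have hmax : (fun ω => max (Real.logb 2 (1 + γb ω) - Real.logb 2 (1 + γe ω)) 0)
      = fun ω => Real.logb 2 (1 + γb ω) - Real.logb 2 (1 + Z ω) := by
    funext ω
    rcases le_total (γb ω) (γe ω) with h | h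
    · have hmin : Z ω = γb ω := min_eq_left h
      have hle : Real.logb 2 (1 + γb ω) ≤ Real.logb 2 (1 + γe ω) :=
        Real.logb_le_logb_of_le one_lt_two (by linarith [hγbpos ω]) (by linarith)
      rw [hmin, max_eq_right (by linarith), sub_self]
    · have hmin : Z ω = γe ω := min_eq_right h
      have hle : Real.logb 2 (1 + γe ω) ≤ Real.logb 2 (1 + γb ω) :=
        Real.logb_le_logb_of_le one_lt_two (by linarith [hγepos ω]) (by linarith)
      rw [hmin, max_eq_left (by linarith)]
  -- the key integral identity
  have hkey : ∫ ω, Real.logb 2 (1 + Z ω) ∂μ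
      = (1 / Real.log 2) * ∫ x in Ioi (0:ℝ),
          (1 - (μ {ω | γe ω ≤ x}).toReal) * (1 - (μ {ω | γb ω ≤ x}).toReal) / (1 + x) := by
    have hm : AEStronglyMeasurable (fun x => (μ {ω | x < Z ω}).toReal / (1 + x))
        (volume.restrict (Ioi 0)) := by
      have := hintL.1
      rwa [hFeq] at this
    have hlayer := layer_log μ Z hZ hZ0 hm
    calc ∫ ω, Real.logb 2 (1 + Z ω) ∂μ
        = ∫ ω, Real.log (1 + Z ω) * (Real.log 2)⁻¹ ∂μ := by
          simp only [Real.logb, div_eq_mul_inv]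
      _ = (∫ ω, Real.log (1 + Z ω) ∂μ) * (Real.log 2)⁻¹ := integral_mul_const _ _
      _ = (∫ x in Ioi (0:ℝ), (μ {ω | x < Z ω}).toReal / (1 + x)) * (Real.log 2)⁻¹ := by
          rw [hlayer]
      _ = (1 / Real.log 2) * ∫ x in Ioi (0:ℝ),
          (1 - (μ {ω | γe ω ≤ x}).toReal) * (1 - (μ {ω | γb ω ≤ x}).toReal) / (1 + x) := by
          rw [hFeq]; ring
  constructor
  · rw [hmax, integral_sub hintb hintZ, hkey]
  · rw [hFeq]
    apply mul_nonneg (by positivity)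
    apply setIntegral_nonneg measurableSet_Ioi
    intro x hx
    have : (0:ℝ) < x := hx
    positivity
end

section
/- With γ_b having MGF M(s) = E[e^{sγ_b}] and γ_e ~ Exponential(mean γ̄_e) independent, the ASC loss satisfies (1/ln 2)∫₀^∞ (1−F_e(x))(1−F_b(x))/(1+x) dx = E[log₂(1+γ_e)] − (e^{1/γ̄_e}/ln 2) ∫₀^1 (1/u) e^{−1/(u γ̄_e)} M(−1/(u γ̄_e)) du, and the correction term G = (e^{1/γ̄_e}/ln 2) ∫₀^1 (1/u) e^{−1/(u γ̄_e)} M(−1/(u γ̄_e)) du is nonnegative. -/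
open MeasureTheory Real Set ProbabilityTheory intervalIntegral

open ENNReal

namespace AscAux
variable {Ω : Type*} [MeasurableSpace Ω]

/-- integrability of `t⁻¹ e^{-t}` on `Ioi c`, `c > 0`. -/
lemma integrableOn_inv_exp {c : ℝ} (hc : 0 < c) :
    IntegrableOn (fun t : ℝ => t⁻¹ * Real.exp (-t)) (Ioi c) := by
  have hg : IntegrableOn (fun t : ℝ => c⁻¹ * Real.exp (-1 * t)) (Ioi c) :=
    (exp_neg_integrableOn_Ioi c one_pos).const_mul c⁻¹
  refine hg.mono' ((measurable_inv.mul (by fun_prop)).aestronglyMeasurable) ?_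
  filter_upwards [ae_restrict_mem measurableSet_Ioi] with t ht
  have ht' : c < t := ht
  have h1 : (0:ℝ) < t := hc.trans ht'
  have h2 : t⁻¹ ≤ c⁻¹ := by
    exact inv_anti₀ hc ht'.le
  rw [Real.norm_eq_abs, abs_of_nonneg (by positivity)]
  have : Real.exp (-1 * t) = Real.exp (-t) := by ring_nf
  rw [this]
  exact mul_le_mul_of_nonneg_right h2 (Real.exp_nonneg _)

/-- integrability of `e^{-rx}/(1+x)` times a `[0,1]`-bounded factor on `Ioi y`, `y ≥ 0`. -/
lemma integrableOn_exp_div {r y : ℝ} (hr : 0 < r) (hy : 0 ≤ y) {F : ℝ → ℝ}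
    (hF : Measurable F) (hF0 : ∀ x, 0 ≤ F x) (hF1 : ∀ x, F x ≤ 1) :
    IntegrableOn (fun x : ℝ => Real.exp (-(r * x)) * F x / (1 + x)) (Ioi y) := by
  have hg : IntegrableOn (fun x : ℝ => Real.exp (-r * x)) (Ioi y) :=
    exp_neg_integrableOn_Ioi y hr
  refine hg.mono' ?_ ?_
  · exact (((by fun_prop : Measurable fun x : ℝ => Real.exp (-(r*x))).mul hF).div
      (by fun_prop)).aestronglyMeasurable
  · filter_upwards [ae_restrict_mem measurableSet_Ioi] with x hx
    have hx' : y < x := hx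
    have h1 : (0:ℝ) < 1 + x := by nlinarith
    rw [Real.norm_eq_abs,
      abs_of_nonneg (div_nonneg (mul_nonneg (Real.exp_nonneg _) (hF0 x)) h1.le)]
    have : Real.exp (-r * x) = Real.exp (-(r * x)) := by ring_nf
    rw [this]
    calc Real.exp (-(r*x)) * F x / (1+x) ≤ Real.exp (-(r*x)) * 1 / 1 := by
          apply div_le_div₀ (by positivity)
            (mul_le_mul_of_nonneg_left (hF1 x) (Real.exp_nonneg _)) one_pos (by linarith)
      _ = Real.exp (-(r*x)) := by ring


/-- R1 : `∫ x in Ioo 0 y, (1+x)⁻¹ = log (1+y)` for `0 ≤ y`. -/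
lemma integral_inv_one_add {y : ℝ} (hy : 0 ≤ y) :
    ∫ x in Ioo 0 y, (1 + x)⁻¹ = Real.log (1 + y) := by
  rw [← integral_Ioc_eq_integral_Ioo, ← intervalIntegral.integral_of_le hy]
  have h : ∀ x ∈ uIcc (0:ℝ) y, HasDerivAt (fun x => Real.log (1 + x)) (1 + x)⁻¹ x := by
    intro x hx
    rw [uIcc_of_le hy] at hx
    have hx0 : (0:ℝ) < 1 + x := by have := hx.1; linarith
    have h1 : HasDerivAt (fun x : ℝ => 1 + x) 1 x := (hasDerivAt_id x).const_add 1
    simpa using h1.log hx0.ne'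
  have hint : IntervalIntegrable (fun x : ℝ => (1 + x)⁻¹) volume 0 y := by
    apply ContinuousOn.intervalIntegrable
    apply (continuousOn_const.add continuousOn_id).inv₀
    intro t ht
    rw [uIcc_of_le hy] at ht
    have := ht.1
    show (1:ℝ) + t ≠ 0
    intro h; linarith
  rw [intervalIntegral.integral_eq_sub_of_hasDerivAt h hint]
  simp

/-- image of `Ioi y` under `x ↦ r*(1+x)`. -/
lemma image_affine {r y : ℝ} (hr : 0 < r) :
    (fun x : ℝ => r * (1 + x)) '' Ioi y = Ioi (r * (1 + y)) := by
  ext t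
  constructor
  · rintro ⟨x, hx, rfl⟩
    have : y < x := hx
    exact (mul_lt_mul_iff_right₀ hr).2 (by linarith)
  · intro ht
    refine ⟨t / r - 1, ?_, ?_⟩
    · have h2 : 1 + y < t / r := by
        rw [lt_div_iff₀ hr, mul_comm]; exact ht
      simp only [Set.mem_Ioi]; linarith
    · field_simp
      ring
/-- substitution `s = r*(1+x)` : R3. -/
lemma subst_affine {r y : ℝ} (hr : 0 < r) (hy : 0 ≤ y) :
    ∫ x in Ioi y, Real.exp (-(r * x)) / (1 + x) =
      Real.exp r * ∫ t in Ioi (r * (1 + y)), t⁻¹ * Real.exp (-t) := by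
  have hderiv : ∀ x ∈ Ioi y, HasDerivWithinAt (fun x : ℝ => r * (1 + x)) r (Ioi y) x := by
    intro x _
    simpa using (((hasDerivAt_id x).const_add 1).const_mul r).hasDerivWithinAt
  have hinj : InjOn (fun x : ℝ => r * (1 + x)) (Ioi y) := by
    intro a _ b _ h
    simp only at h
    nlinarith [h]
  have := integral_image_eq_integral_abs_deriv_smul measurableSet_Ioi hderiv hinj
    (fun t => t⁻¹ * Real.exp (-t))
  rw [image_affine hr] at this
  rw [this, ← MeasureTheory.integral_const_mul]
  apply setIntegral_congr_fun measurableSet_Ioi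
  intro x hx
  have hx' : y < x := hx
  have h1 : (1:ℝ) + x ≠ 0 → True := fun _ => trivial
  simp only [smul_eq_mul, abs_of_pos hr]
  rw [show -(r*(1+x)) = -(r*x) - r by ring, Real.exp_sub]
  rw [div_eq_mul_inv, Real.exp_neg]
  have hex : Real.exp (r*x) ≠ 0 := (Real.exp_pos _).ne'
  have her : Real.exp r ≠ 0 := (Real.exp_pos _).ne'
  have h1x : (1:ℝ) + x ≠ 0 := by intro h; nlinarith [hx', hr, hy]
  field_simp


lemma image_mul {r y : ℝ} (hr : 0 < r) (hy : 0 ≤ y) :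
    (fun s : ℝ => s * (1 + y)) '' Ioi r = Ioi (r * (1 + y)) := by
  have h1 : (0:ℝ) < 1 + y := by linarith
  ext t
  constructor
  · rintro ⟨s, hs, rfl⟩
    have : r < s := hs
    exact (mul_lt_mul_iff_left₀ h1).2 this
  · intro ht
    refine ⟨t / (1 + y), ?_, by field_simp⟩
    have h2 : r * (1 + y) < t := ht
    simp only [Set.mem_Ioi]
    rw [lt_div_iff₀ h1]
    exact h2

/-- R5 : substitution `t = s*(1+y)` on `Ioi r`. -/
lemma subst_mul {r y : ℝ} (hr : 0 < r) (hy : 0 ≤ y) :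
    ∫ s in Ioi r, s⁻¹ * Real.exp (-(s * (1 + y))) =
      ∫ t in Ioi (r * (1 + y)), t⁻¹ * Real.exp (-t) := by
  have h1 : (0:ℝ) < 1 + y := by linarith
  have hderiv : ∀ s ∈ Ioi r, HasDerivWithinAt (fun s : ℝ => s * (1 + y)) (1 + y) (Ioi r) s := by
    intro s _
    simpa using ((hasDerivAt_id s).mul_const (1 + y)).hasDerivWithinAt
  have hinj : InjOn (fun s : ℝ => s * (1 + y)) (Ioi r) := by
    intro a _ b _ h
    simp only at h
    exact mul_right_cancel₀ h1.ne' h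
  have := integral_image_eq_integral_abs_deriv_smul measurableSet_Ioi hderiv hinj
    (fun t => t⁻¹ * Real.exp (-t))
  rw [image_mul hr hy] at this
  rw [this]
  apply setIntegral_congr_fun measurableSet_Ioi
  intro s hs
  have hs' : r < s := hs
  have hs0 : (0:ℝ) < s := hr.trans hs'
  simp only [smul_eq_mul, abs_of_pos h1]
  field_simp

lemma image_inv {r : ℝ} (hr : 0 < r) :
    (fun u : ℝ => r / u) '' Ioo 0 1 = Ioi r := by
  ext t
  constructor
  · rintro ⟨u, hu, rfl⟩
    have h0 : 0 < u := hu.1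
    have h1 : u < 1 := hu.2
    simp only [Set.mem_Ioi]
    rw [lt_div_iff₀ h0]
    nlinarith
  · intro ht
    have ht' : r < t := ht
    have ht0 : 0 < t := hr.trans ht'
    refine ⟨r / t, ⟨by positivity, by rwa [div_lt_one ht0]⟩, ?_⟩
    field_simp

/-- R4 core : substitution `t = r/u` carrying an arbitrary function `M`. -/
lemma subst_inv {r : ℝ} (hr : 0 < r) (M : ℝ → ℝ) :
    ∫ u in Ioo (0:ℝ) 1, u⁻¹ * Real.exp (-(r / u)) * M (-(r / u)) =
      ∫ t in Ioi r, t⁻¹ * Real.exp (-t) * M (-t) := by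
  have hderiv : ∀ u ∈ Ioo (0:ℝ) 1,
      HasDerivWithinAt (fun u : ℝ => r / u) (-(r / u ^ 2)) (Ioo 0 1) u := by
    intro u hu
    have h0 : u ≠ 0 := hu.1.ne'
    have := (hasDerivAt_inv h0).const_mul r
    simp only [div_eq_mul_inv]
    rw [show -(r * (u ^ 2)⁻¹) = r * -(u ^ 2)⁻¹ by ring]
    exact this.hasDerivWithinAt
  have hinj : InjOn (fun u : ℝ => r / u) (Ioo 0 1) := by
    intro a ha b hb h
    simp only at h
    have ha0 : a ≠ 0 := ha.1.ne'
    have hb0 : b ≠ 0 := hb.1.ne'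
    field_simp at h
    linarith
  have := integral_image_eq_integral_abs_deriv_smul measurableSet_Ioo hderiv hinj
    (fun t => t⁻¹ * Real.exp (-t) * M (-t))
  rw [image_inv hr] at this
  rw [this]
  apply setIntegral_congr_fun measurableSet_Ioo
  intro u hu
  have h0 : 0 < u := hu.1
  have hrne : r ≠ 0 := hr.ne'
  simp only [smul_eq_mul, abs_neg]
  rw [abs_of_pos (by positivity : (0:ℝ) < r / u ^ 2)]
  rw [show (r / u)⁻¹ = u / r by field_simp]
  field_simp



/-- the general Fubini swap. -/
lemma swap_gen (μ : Measure Ω) [IsProbabilityMeasure μ] {S : Set (ℝ × Ω)}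
    (hS : MeasurableSet S) {k : ℝ → ℝ≥0∞} (hk : Measurable k) (hk' : ∀ x, k x ≠ ⊤) :
    ∫⁻ x in Ioi (0:ℝ), k x * μ {ω | (x, ω) ∈ S} =
      ∫⁻ ω, (∫⁻ x in ({x' | (x', ω) ∈ S} ∩ Ioi (0:ℝ)), k x) ∂μ := by
  have hmeas : ∀ x : ℝ, MeasurableSet {ω | (x, ω) ∈ S} := fun x =>
    hS.preimage measurable_prodMk_left
  have h1 : ∀ x : ℝ, k x * μ {ω | (x, ω) ∈ S} =
      ∫⁻ ω, k x * S.indicator (fun _ => 1) (x, ω) ∂μ := by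
    intro x
    rw [lintegral_const_mul' _ _ (hk' x), ← lintegral_indicator_one (hmeas x)]
    congr 1
  simp_rw [h1]
  rw [lintegral_lintegral_swap]
  · apply lintegral_congr
    intro ω
    have hT : MeasurableSet {x' : ℝ | (x', ω) ∈ S} :=
      hS.preimage (measurable_id.prodMk measurable_const)
    calc ∫⁻ x in Ioi (0:ℝ), k x * S.indicator (fun _ => 1) (x, ω)
        = ∫⁻ x in Ioi (0:ℝ), {x' | (x', ω) ∈ S}.indicator k x := by
          apply lintegral_congr
          intro x
          by_cases h : (x, ω) ∈ S <;> simp [Set.indicator, h]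
      _ = ∫⁻ x in {x' | (x', ω) ∈ S} ∩ Ioi (0:ℝ), k x := by
          rw [lintegral_indicator hT, Measure.restrict_restrict hT]
  · apply Measurable.aemeasurable
    apply Measurable.mul
    · exact hk.comp measurable_fst
    · exact measurable_const.indicator hS



lemma exp_cdf (μ : Measure Ω) [IsProbabilityMeasure μ] {γe : Ω → ℝ} (hγe : Measurable γe)
    {r : ℝ} (hr : 0 < r) (hdist : μ.map γe = expMeasure r) {x : ℝ} (hx : 0 ≤ x) :
    μ {ω | γe ω ≤ x} = ENNReal.ofReal (1 - Real.exp (-(r * x))) := by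
  have hP : IsProbabilityMeasure (expMeasure r) := isProbabilityMeasure_expMeasure hr
  have h1 : μ {ω | γe ω ≤ x} = expMeasure r (Iic x) := by
    rw [← hdist, Measure.map_apply hγe measurableSet_Iic]
    rfl
  have h2 : (expMeasure r (Iic x)).toReal = 1 - Real.exp (-(r * x)) := by
    have h3 := cdf_expMeasure_eq hr x
    rw [if_pos hx] at h3
    rw [← h3, cdf_eq_real]
    rfl
  rw [h1, ← h2, ENNReal.ofReal_toReal (measure_ne_top _ _)]

lemma exp_surv (μ : Measure Ω) [IsProbabilityMeasure μ] {γe : Ω → ℝ} (hγe : Measurable γe)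
    {r : ℝ} (hr : 0 < r) (hdist : μ.map γe = expMeasure r) {x : ℝ} (hx : 0 ≤ x) :
    μ {ω | x < γe ω} = ENNReal.ofReal (Real.exp (-(r * x))) := by
  have hc : {ω | x < γe ω} = {ω | γe ω ≤ x}ᶜ := by
    ext ω; simp [not_le]
  have hms : MeasurableSet {ω | γe ω ≤ x} := hγe measurableSet_Iic
  rw [hc, prob_compl_eq_one_sub hms, exp_cdf μ hγe hr hdist hx]
  have he1 : Real.exp (-(r * x)) ≤ 1 := Real.exp_le_one_iff.mpr (by nlinarith)
  rw [show (1:ℝ≥0∞) = ENNReal.ofReal 1 by simp, ← ENNReal.ofReal_sub _ (by linarith [Real.exp_pos (-(r*x))])]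
  norm_num

lemma exp_surv_toReal (μ : Measure Ω) [IsProbabilityMeasure μ] {γe : Ω → ℝ} (hγe : Measurable γe)
    {r : ℝ} (hr : 0 < r) (hdist : μ.map γe = expMeasure r) {x : ℝ} (hx : 0 ≤ x) :
    1 - (μ {ω | γe ω ≤ x}).toReal = Real.exp (-(r * x)) := by
  rw [exp_cdf μ hγe hr hdist hx, ENNReal.toReal_ofReal (by nlinarith [Real.exp_pos (-(r*x)), Real.exp_le_one_iff.mpr (show -(r*x) ≤ 0 by nlinarith)])]
  ring

variable {Ω : Type*} [MeasurableSpace Ω]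

/-- Claim A. -/
lemma claimA (μ : Measure Ω) [IsProbabilityMeasure μ] {γe : Ω → ℝ} (hγe : Measurable γe)
    (hγepos : ∀ ω, 0 ≤ γe ω) {r : ℝ} (hr : 0 < r) (hdist : μ.map γe = expMeasure r)
    (hinte' : Integrable (fun ω => Real.log (1 + γe ω)) μ) :
    ∫ x in Ioi (0:ℝ), Real.exp (-(r * x)) / (1 + x) = ∫ ω, Real.log (1 + γe ω) ∂μ := by
  have hf0 : IntegrableOn (fun x : ℝ => Real.exp (-(r * x)) / (1 + x)) (Ioi 0) := by
    have := integrableOn_exp_div hr le_rfl (F := fun _ => (1:ℝ)) measurable_const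
      (fun _ => zero_le_one) (fun _ => le_rfl)
    simpa using this
  have hLnn : (0:ℝ) ≤ ∫ x in Ioi (0:ℝ), Real.exp (-(r * x)) / (1 + x) := by
    apply setIntegral_nonneg measurableSet_Ioi
    intro x hx
    have : (0:ℝ) < x := hx
    positivity
  have hRnn : (0:ℝ) ≤ ∫ ω, Real.log (1 + γe ω) ∂μ := by
    apply MeasureTheory.integral_nonneg
    intro ω
    exact Real.log_nonneg (by linarith [hγepos ω])
  rw [← ENNReal.ofReal_eq_ofReal_iff hLnn hRnn]
  have hnn0 : 0 ≤ᵐ[volume.restrict (Ioi (0:ℝ))] fun x => Real.exp (-(r * x)) / (1 + x) := by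
    filter_upwards [ae_restrict_mem measurableSet_Ioi] with x hx
    have : (0:ℝ) < x := hx
    positivity
  rw [ofReal_integral_eq_lintegral_ofReal hf0 hnn0]
  have hnnR : 0 ≤ᵐ[μ] fun ω => Real.log (1 + γe ω) := by
    filter_upwards with ω
    exact Real.log_nonneg (by linarith [hγepos ω])
  rw [ofReal_integral_eq_lintegral_ofReal hinte' hnnR]
  set k : ℝ → ℝ≥0∞ := fun x => ENNReal.ofReal ((1 + x)⁻¹) with hk_def
  have hkmeas : Measurable k := by fun_prop
  have hkne : ∀ x, k x ≠ ⊤ := fun x => ENNReal.ofReal_ne_top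
  have hS : MeasurableSet {p : ℝ × Ω | p.1 < γe p.2} :=
    measurableSet_lt measurable_fst (hγe.comp measurable_snd)
  calc ∫⁻ x in Ioi (0:ℝ), ENNReal.ofReal (Real.exp (-(r * x)) / (1 + x))
      = ∫⁻ x in Ioi (0:ℝ), k x * μ {ω | (x, ω) ∈ {p : ℝ × Ω | p.1 < γe p.2}} := by
        apply setLIntegral_congr_fun_ae measurableSet_Ioi
        filter_upwards with x hx
        have hx0 : (0:ℝ) < x := hx
        have h1x : (0:ℝ) < 1 + x := by linarith
        rw [exp_surv μ hγe hr hdist hx0.le, hk_def]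
        rw [← ENNReal.ofReal_mul (by positivity)]
        congr 1
        rw [div_eq_mul_inv]
        ring
    _ = ∫⁻ ω, (∫⁻ x in ({x' | (x', ω) ∈ {p : ℝ × Ω | p.1 < γe p.2}} ∩ Ioi (0:ℝ)), k x) ∂μ :=
        swap_gen μ hS hkmeas hkne
    _ = ∫⁻ ω, ENNReal.ofReal (Real.log (1 + γe ω)) ∂μ := by
        apply lintegral_congr
        intro ω
        have hset : {x' : ℝ | (x', ω) ∈ {p : ℝ × Ω | p.1 < γe p.2}} ∩ Ioi (0:ℝ)
            = Ioo 0 (γe ω) := by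
          ext x
          simp only [Set.mem_inter_iff, Set.mem_setOf_eq, Set.mem_Ioi, Set.mem_Ioo]
          tauto
        rw [hset]
        have hint : IntegrableOn (fun x : ℝ => (1 + x)⁻¹) (Ioo 0 (γe ω)) := by
          refine (integrableOn_const (C := (1:ℝ)) measure_Ioo_lt_top.ne).mono' ?_ ?_
          · exact (by fun_prop : Measurable fun x : ℝ => (1+x)⁻¹).aestronglyMeasurable
          · filter_upwards [ae_restrict_mem measurableSet_Ioo] with x hx
            have hx0 : (0:ℝ) < x := hx.1
            rw [Real.norm_eq_abs, abs_of_nonneg (by positivity)]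
            rw [inv_le_one_iff₀]
            right; linarith
        have hnn : 0 ≤ᵐ[volume.restrict (Ioo (0:ℝ) (γe ω))] fun x : ℝ => (1 + x)⁻¹ := by
          filter_upwards [ae_restrict_mem measurableSet_Ioo] with x hx
          have hx0 : (0:ℝ) < x := hx.1
          positivity
        rw [hk_def, ← ofReal_integral_eq_lintegral_ofReal hint hnn,
          integral_inv_one_add (hγepos ω)]


lemma inter_ae {y : ℝ} (hy : 0 ≤ y) : (Ici y ∩ Ioi 0 : Set ℝ) =ᵐ[volume] Ioi y := by
  have h0 : ∀ᵐ x : ℝ, x ≠ y := by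
    rw [ae_iff]
    simpa using by simp [Real.volume_singleton]
  filter_upwards [h0] with x hx
  simp only [Set.mem_inter_iff, Set.mem_Ici, Set.mem_Ioi, eq_iff_iff]
  constructor
  · rintro ⟨h1, _⟩
    exact lt_of_le_of_ne h1 (Ne.symm hx)
  · intro h
    exact ⟨h.le, lt_of_le_of_lt hy h⟩

/-- Claim B. -/
lemma claimB (μ : Measure Ω) [IsProbabilityMeasure μ] {γb : Ω → ℝ} (hγb : Measurable γb)
    (hγbpos : ∀ ω, 0 ≤ γb ω) {r : ℝ} (hr : 0 < r) :
    ∫ x in Ioi (0:ℝ), Real.exp (-(r * x)) * (μ {ω | γb ω ≤ x}).toReal / (1 + x) =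
      Real.exp r *
        ∫ t in Ioi r, t⁻¹ * Real.exp (-t) * (∫ ω, Real.exp (-(t * γb ω)) ∂μ) := by
  set Mt : ℝ → ℝ := fun t => ∫ ω, Real.exp (-(t * γb ω)) ∂μ with hMt_def
  have hMt_meas : Measurable Mt := by
    have hsm : StronglyMeasurable (fun p : ℝ × Ω => Real.exp (-(p.1 * γb p.2))) :=
      (Measurable.stronglyMeasurable (by fun_prop))
    exact hsm.integral_prod_right'.measurable
  have hintMt : ∀ t : ℝ, 0 ≤ t → Integrable (fun ω => Real.exp (-(t * γb ω))) μ := by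
    intro t ht
    refine (integrable_const (1:ℝ)).mono' (Measurable.aestronglyMeasurable (by fun_prop)) ?_
    filter_upwards with ω
    rw [Real.norm_eq_abs, abs_of_nonneg (Real.exp_nonneg _)]
    exact Real.exp_le_one_iff.mpr (by nlinarith [hγbpos ω])
  have hMt0 : ∀ t, 0 ≤ Mt t := fun t => MeasureTheory.integral_nonneg fun ω => Real.exp_nonneg _
  have hMt1 : ∀ t : ℝ, 0 ≤ t → Mt t ≤ 1 := by
    intro t ht
    calc Mt t ≤ ∫ _ω, (1:ℝ) ∂μ := by
          apply MeasureTheory.integral_mono (hintMt t ht) (integrable_const 1)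
          intro ω
          exact Real.exp_le_one_iff.mpr (by nlinarith [hγbpos ω])
      _ = 1 := by simp
  -- measurability of the CDF of γb
  have hFb_meas : Measurable (fun x : ℝ => (μ {ω | γb ω ≤ x}).toReal) := by
    apply Monotone.measurable
    intro a b hab
    exact ENNReal.toReal_mono (measure_ne_top _ _)
      (measure_mono fun ω (h : γb ω ≤ a) => h.trans hab)
  have hFb0 : ∀ x, 0 ≤ (μ {ω | γb ω ≤ x}).toReal := fun x => ENNReal.toReal_nonneg
  have hFb1 : ∀ x, (μ {ω | γb ω ≤ x}).toReal ≤ 1 := by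
    intro x
    exact ENNReal.toReal_le_of_le_ofReal one_pos.le (by simpa using prob_le_one)
  have hf1 : IntegrableOn
      (fun x : ℝ => Real.exp (-(r * x)) * (μ {ω | γb ω ≤ x}).toReal / (1 + x)) (Ioi 0) :=
    integrableOn_exp_div hr le_rfl hFb_meas hFb0 hFb1
  have hg : IntegrableOn (fun t : ℝ => t⁻¹ * Real.exp (-t) * Mt t) (Ioi r) := by
    refine (integrableOn_inv_exp hr).mono' ?_ ?_
    · exact ((measurable_inv.mul (by fun_prop)).mul hMt_meas).aestronglyMeasurable
    · filter_upwards [ae_restrict_mem measurableSet_Ioi] with t ht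
      have ht' : r < t := ht
      have ht0 : (0:ℝ) < t := hr.trans ht'
      rw [Real.norm_eq_abs, abs_of_nonneg (mul_nonneg (by positivity) (hMt0 t))]
      calc t⁻¹ * Real.exp (-t) * Mt t ≤ t⁻¹ * Real.exp (-t) * 1 :=
            mul_le_mul_of_nonneg_left (hMt1 t ht0.le) (by positivity)
        _ = t⁻¹ * Real.exp (-t) := by ring
  -- nonnegativity of both sides
  have hLnn : (0:ℝ) ≤ ∫ x in Ioi (0:ℝ),
      Real.exp (-(r * x)) * (μ {ω | γb ω ≤ x}).toReal / (1 + x) := by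
    apply setIntegral_nonneg measurableSet_Ioi
    intro x hx
    have hx0 : (0:ℝ) < x := hx
    have h1x : (0:ℝ) < 1 + x := by linarith
    exact div_nonneg (mul_nonneg (Real.exp_nonneg _) (hFb0 x)) h1x.le
  have hRnn : (0:ℝ) ≤ ∫ t in Ioi r, t⁻¹ * Real.exp (-t) * Mt t := by
    apply setIntegral_nonneg measurableSet_Ioi
    intro t ht
    have ht0 : (0:ℝ) < t := hr.trans ht
    exact mul_nonneg (by positivity) (hMt0 t)
  -- the common double lintegral
  set D : ℝ≥0∞ := ∫⁻ ω, (∫⁻ t in Ioi (r * (1 + γb ω)), ENNReal.ofReal (t⁻¹ * Real.exp (-t))) ∂μ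
    with hD_def
  -- LEFT SIDE
  have hS : MeasurableSet {p : ℝ × Ω | γb p.2 ≤ p.1} :=
    measurableSet_le (hγb.comp measurable_snd) measurable_fst
  set k : ℝ → ℝ≥0∞ := fun x => ENNReal.ofReal (Real.exp (-(r * x)) / (1 + x)) with hk_def
  have hkmeas : Measurable k := by fun_prop
  have hkne : ∀ x, k x ≠ ⊤ := fun x => ENNReal.ofReal_ne_top
  have hL : ENNReal.ofReal (∫ x in Ioi (0:ℝ),
      Real.exp (-(r * x)) * (μ {ω | γb ω ≤ x}).toReal / (1 + x)) =
      ENNReal.ofReal (Real.exp r) * D := by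
    rw [ofReal_integral_eq_lintegral_ofReal hf1 ?nn]
    case nn =>
      filter_upwards [ae_restrict_mem measurableSet_Ioi] with x hx
      have hx0 : (0:ℝ) < x := hx
      have h1x : (0:ℝ) < 1 + x := by linarith
      exact div_nonneg (mul_nonneg (Real.exp_nonneg _) (hFb0 x)) h1x.le
    calc ∫⁻ x in Ioi (0:ℝ), ENNReal.ofReal
          (Real.exp (-(r * x)) * (μ {ω | γb ω ≤ x}).toReal / (1 + x))
        = ∫⁻ x in Ioi (0:ℝ), k x * μ {ω | (x, ω) ∈ {p : ℝ × Ω | γb p.2 ≤ p.1}} := by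
          apply setLIntegral_congr_fun_ae measurableSet_Ioi
          filter_upwards with x hx
          have hx0 : (0:ℝ) < x := hx
          have h1x : (0:ℝ) < 1 + x := by linarith
          rw [hk_def]
          rw [show Real.exp (-(r * x)) * (μ {ω | γb ω ≤ x}).toReal / (1 + x)
            = (Real.exp (-(r * x)) / (1 + x)) * (μ {ω | γb ω ≤ x}).toReal by ring]
          rw [ENNReal.ofReal_mul (by positivity), ENNReal.ofReal_toReal (measure_ne_top _ _)]
      _ = ∫⁻ ω, (∫⁻ x in ({x' | (x', ω) ∈ {p : ℝ × Ω | γb p.2 ≤ p.1}} ∩ Ioi (0:ℝ)), k x) ∂μ :=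
          swap_gen μ hS hkmeas hkne
      _ = ∫⁻ ω, ENNReal.ofReal (Real.exp r) *
            (∫⁻ t in Ioi (r * (1 + γb ω)), ENNReal.ofReal (t⁻¹ * Real.exp (-t))) ∂μ := by
          apply lintegral_congr
          intro ω
          have hy := hγbpos ω
          have hset : {x' : ℝ | (x', ω) ∈ {p : ℝ × Ω | γb p.2 ≤ p.1}} ∩ Ioi (0:ℝ)
              = Ici (γb ω) ∩ Ioi 0 := rfl
          rw [hset, Measure.restrict_congr_set (inter_ae hy)]
          have hint : IntegrableOn (fun x : ℝ => Real.exp (-(r * x)) / (1 + x)) (Ioi (γb ω)) := by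
            have := integrableOn_exp_div hr hy (F := fun _ => (1:ℝ)) measurable_const
              (fun _ => zero_le_one) (fun _ => le_rfl)
            simpa using this
          have hnn : 0 ≤ᵐ[volume.restrict (Ioi (γb ω))]
              fun x : ℝ => Real.exp (-(r * x)) / (1 + x) := by
            filter_upwards [ae_restrict_mem measurableSet_Ioi] with x hx
            have hx0 : γb ω < x := hx
            have h1x : (0:ℝ) < 1 + x := by linarith
            positivity
          rw [hk_def, ← ofReal_integral_eq_lintegral_ofReal hint hnn,
            subst_affine hr hy,
            ENNReal.ofReal_mul (Real.exp_nonneg r),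
            ofReal_integral_eq_lintegral_ofReal
              (integrableOn_inv_exp (by positivity)) ?nn2]
          case nn2 =>
            filter_upwards [ae_restrict_mem measurableSet_Ioi] with t ht
            have ht0 : (0:ℝ) < t := lt_trans (by positivity) ht
            positivity
      _ = ENNReal.ofReal (Real.exp r) * D := by
          rw [hD_def, lintegral_const_mul' _ _ ENNReal.ofReal_ne_top]
  -- RIGHT SIDE
  have hR : ENNReal.ofReal (∫ t in Ioi r, t⁻¹ * Real.exp (-t) * Mt t) = D := by
    rw [ofReal_integral_eq_lintegral_ofReal hg ?nn3]
    case nn3 =>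
      filter_upwards [ae_restrict_mem measurableSet_Ioi] with t ht
      have ht0 : (0:ℝ) < t := hr.trans ht
      exact mul_nonneg (by positivity) (hMt0 t)
    calc ∫⁻ t in Ioi r, ENNReal.ofReal (t⁻¹ * Real.exp (-t) * Mt t)
        = ∫⁻ t in Ioi r, ∫⁻ ω, ENNReal.ofReal
            (t⁻¹ * Real.exp (-t) * Real.exp (-(t * γb ω))) ∂μ := by
          apply setLIntegral_congr_fun_ae measurableSet_Ioi
          filter_upwards with t ht
          have ht0 : (0:ℝ) < t := hr.trans ht
          have : t⁻¹ * Real.exp (-t) * Mt t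
              = ∫ ω, t⁻¹ * Real.exp (-t) * Real.exp (-(t * γb ω)) ∂μ := by
            rw [hMt_def, ← MeasureTheory.integral_const_mul]
          rw [this, ofReal_integral_eq_lintegral_ofReal
            (((hintMt t ht0.le).const_mul _)) ?nn4]
          case nn4 =>
            filter_upwards with ω
            positivity
      _ = ∫⁻ ω, (∫⁻ t in Ioi r, ENNReal.ofReal
            (t⁻¹ * Real.exp (-t) * Real.exp (-(t * γb ω)))) ∂μ := by
          apply lintegral_lintegral_swap
          apply Measurable.aemeasurable
          apply ENNReal.measurable_ofReal.comp
          fun_prop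
      _ = D := by
          rw [hD_def]
          apply lintegral_congr
          intro ω
          have hy := hγbpos ω
          have hptwise : ∀ t : ℝ, t⁻¹ * Real.exp (-t) * Real.exp (-(t * γb ω))
              = t⁻¹ * Real.exp (-(t * (1 + γb ω))) := by
            intro t
            rw [mul_assoc, ← Real.exp_add]
            congr 2
            ring
          simp_rw [hptwise]
          have hint2 : IntegrableOn (fun t : ℝ => t⁻¹ * Real.exp (-(t * (1 + γb ω))))
              (Ioi r) := by
            refine (integrableOn_inv_exp hr).mono' ?_ ?_
            · exact (measurable_inv.mul (by fun_prop)).aestronglyMeasurable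
            · filter_upwards [ae_restrict_mem measurableSet_Ioi] with t ht
              have ht0 : (0:ℝ) < t := hr.trans ht
              rw [Real.norm_eq_abs, abs_of_nonneg (by positivity)]
              apply mul_le_mul_of_nonneg_left _ (by positivity)
              apply Real.exp_le_exp.mpr
              nlinarith
          have hnn5 : 0 ≤ᵐ[volume.restrict (Ioi r)]
              fun t : ℝ => t⁻¹ * Real.exp (-(t * (1 + γb ω))) := by
            filter_upwards [ae_restrict_mem measurableSet_Ioi] with t ht
            have ht0 : (0:ℝ) < t := hr.trans ht
            positivity
          rw [← ofReal_integral_eq_lintegral_ofReal hint2 hnn5,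
            subst_mul hr hy,
            ofReal_integral_eq_lintegral_ofReal
              (integrableOn_inv_exp (by positivity)) ?nn6]
          case nn6 =>
            filter_upwards [ae_restrict_mem measurableSet_Ioi] with t ht
            have ht0 : (0:ℝ) < t := lt_trans (by positivity) ht
            positivity
  -- combine
  have hcomb : ENNReal.ofReal (∫ x in Ioi (0:ℝ),
      Real.exp (-(r * x)) * (μ {ω | γb ω ≤ x}).toReal / (1 + x)) =
      ENNReal.ofReal (Real.exp r * ∫ t in Ioi r, t⁻¹ * Real.exp (-t) * Mt t) := by
    rw [hL, ← hR, ← ENNReal.ofReal_mul (Real.exp_nonneg r)]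
  have := (ENNReal.ofReal_eq_ofReal_iff hLnn
    (mul_nonneg (Real.exp_nonneg r) hRnn)).mp hcomb
  exact this


end AscAux

open AscAux in
/-- MGF form of the ASC loss: with `M(s) = E[e^{sγ_b}]` and `γ_e` exponential with mean
`γ̄_e`, the ASC loss equals `E[log₂(1+γ_e)] − G`, where
`G = (e^{1/γ̄_e}/ln 2) ∫₀¹ (1/u) e^{−1/(uγ̄_e)} M(−1/(uγ̄_e)) du ≥ 0`. -/
theorem asc_loss_mgf_form
    {Ω : Type*} [MeasurableSpace Ω] (μ : Measure Ω) [IsProbabilityMeasure μ]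
    (γb γe : Ω → ℝ) (gebar : ℝ) (hgebar : 0 < gebar)
    (hγb : Measurable γb) (hγe : Measurable γe)
    (hγbpos : ∀ ω, 0 ≤ γb ω) (hγepos : ∀ ω, 0 ≤ γe ω)
    (hγedist : μ.map γe = expMeasure (1 / gebar))
    (hindep : IndepFun γb γe μ)
    (M : ℝ → ℝ) (hM : M = fun s => ∫ ω, Real.exp (s * γb ω) ∂μ)
    (hinte : Integrable (fun ω => Real.logb 2 (1 + γe ω)) μ)
    (hintL : IntegrableOn
      (fun x => (1 - (μ {ω | γe ω ≤ x}).toReal) * (1 - (μ {ω | γb ω ≤ x}).toReal) /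
        (1 + x)) (Ioi 0) volume) :
    ((1 / Real.log 2) * ∫ x in Ioi (0 : ℝ),
        (1 - (μ {ω | γe ω ≤ x}).toReal) * (1 - (μ {ω | γb ω ≤ x}).toReal) / (1 + x) =
      (∫ ω, Real.logb 2 (1 + γe ω) ∂μ) -
        Real.exp (1 / gebar) / Real.log 2 *
          ∫ u in (0 : ℝ)..1, (1 / u) * Real.exp (-1 / (u * gebar)) *
            M (-1 / (u * gebar))) ∧
      0 ≤ Real.exp (1 / gebar) / Real.log 2 *
          ∫ u in (0 : ℝ)..1, (1 / u) * Real.exp (-1 / (u * gebar)) *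
            M (-1 / (u * gebar)) := by
  have hr : (0:ℝ) < 1 / gebar := by positivity
  set r : ℝ := 1 / gebar with hr_def
  set J : ℝ := ∫ u in (0 : ℝ)..1, (1 / u) * Real.exp (-1 / (u * gebar)) *
      M (-1 / (u * gebar)) with hJ_def
  have hMnn : ∀ s, 0 ≤ M s := by
    intro s
    rw [hM]
    exact MeasureTheory.integral_nonneg fun ω => Real.exp_nonneg _
  have hJnn : 0 ≤ J := by
    rw [hJ_def]
    apply intervalIntegral.integral_nonneg zero_le_one
    intro u hu
    have hu0 : 0 ≤ u := hu.1
    have h1u : (0:ℝ) ≤ 1 / u := by positivity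
    exact mul_nonneg (mul_nonneg h1u (Real.exp_nonneg _)) (hMnn _)
  have hlog2 : (0:ℝ) < Real.log 2 := Real.log_pos one_lt_two
  have hGnn : 0 ≤ Real.exp (1 / gebar) / Real.log 2 * J :=
    mul_nonneg (div_nonneg (Real.exp_nonneg _) hlog2.le) hJnn
  refine ⟨?_, hGnn⟩
  -- rewrite J as an integral over `Ioi r`
  have hMt : ∀ t : ℝ, M (-t) = ∫ ω, Real.exp (-(t * γb ω)) ∂μ := by
    intro t
    rw [hM]
    simp only [neg_mul]
  have hJ1 : J = ∫ t in Ioi r, t⁻¹ * Real.exp (-t) * (∫ ω, Real.exp (-(t * γb ω)) ∂μ) := by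
    have h1 : J = ∫ u in Ioo (0:ℝ) 1, u⁻¹ * Real.exp (-(r/u)) * M (-(r/u)) := by
      rw [hJ_def, intervalIntegral.integral_of_le zero_le_one, integral_Ioc_eq_integral_Ioo]
      apply setIntegral_congr_fun measurableSet_Ioo
      intro u hu
      have hu0 : 0 < u := hu.1
      have h2 : -1 / (u * gebar) = -(r/u) := by
        rw [hr_def]
        field_simp
      simp only [h2, one_div]
    rw [h1, subst_inv hr M]
    apply setIntegral_congr_fun measurableSet_Ioi
    intro t ht
    simp only [hMt]
  -- claim B
  have hB : (∫ x in Ioi (0:ℝ), Real.exp (-(r * x)) * (μ {ω | γb ω ≤ x}).toReal / (1 + x))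
      = Real.exp r * J := by
    rw [claimB μ hγb hγbpos hr, hJ1]
  -- claim A
  have hinte' : Integrable (fun ω => Real.log (1 + γe ω)) μ := by
    have h : (fun ω => Real.log (1 + γe ω))
        = fun ω => Real.logb 2 (1 + γe ω) * Real.log 2 := by
      funext ω
      rw [Real.logb]
      field_simp
    rw [h]
    exact hinte.mul_const _
  have hA : (∫ x in Ioi (0:ℝ), Real.exp (-(r * x)) / (1 + x))
      = ∫ ω, Real.log (1 + γe ω) ∂μ :=
    claimA μ hγe hγepos hr hγedist hinte'
  -- split the left integral
  have hFb_meas : Measurable (fun x : ℝ => (μ {ω | γb ω ≤ x}).toReal) := by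
    apply Monotone.measurable
    intro a b hab
    exact ENNReal.toReal_mono (measure_ne_top _ _)
      (measure_mono fun ω (h : γb ω ≤ a) => h.trans hab)
  have hFb0 : ∀ x, 0 ≤ (μ {ω | γb ω ≤ x}).toReal := fun x => ENNReal.toReal_nonneg
  have hFb1 : ∀ x, (μ {ω | γb ω ≤ x}).toReal ≤ 1 := by
    intro x
    exact ENNReal.toReal_le_of_le_ofReal one_pos.le (by simpa using prob_le_one)
  have hf0 : IntegrableOn (fun x : ℝ => Real.exp (-(r * x)) / (1 + x)) (Ioi 0) := by
    have := integrableOn_exp_div hr le_rfl (F := fun _ => (1:ℝ)) measurable_const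
      (fun _ => zero_le_one) (fun _ => le_rfl)
    simpa using this
  have hf1 : IntegrableOn
      (fun x : ℝ => Real.exp (-(r * x)) * (μ {ω | γb ω ≤ x}).toReal / (1 + x)) (Ioi 0) :=
    integrableOn_exp_div hr le_rfl hFb_meas hFb0 hFb1
  have hsplit : (∫ x in Ioi (0:ℝ),
      (1 - (μ {ω | γe ω ≤ x}).toReal) * (1 - (μ {ω | γb ω ≤ x}).toReal) / (1 + x))
      = (∫ x in Ioi (0:ℝ), Real.exp (-(r * x)) / (1 + x))
        - ∫ x in Ioi (0:ℝ), Real.exp (-(r * x)) * (μ {ω | γb ω ≤ x}).toReal / (1 + x) := by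
    rw [← MeasureTheory.integral_sub hf0 hf1]
    apply setIntegral_congr_fun measurableSet_Ioi
    intro x hx
    have hx0 : (0:ℝ) < x := hx
    simp only [exp_surv_toReal μ hγe hr hγedist hx0.le]
    ring
  -- logb is log / log 2
  have hlogb : (∫ ω, Real.logb 2 (1 + γe ω) ∂μ)
      = (∫ ω, Real.log (1 + γe ω) ∂μ) / Real.log 2 := by
    simp_rw [Real.logb]
    rw [MeasureTheory.integral_div]
  rw [hsplit, hA, hB, hlogb]
  field_simp
end

section
/- Let γ_b = c X² where X ~ N(μ, σ²) with μ > 0 (folded-normal magnitude, squared) and γ_e ~ Exponential(mean γ̄_e), independent, τ > 1. As γ̄_b = c(μ² + σ²) → ∞ with K = μ²/σ² fixed, the secrecy outage probability decays proportionally to γ̄_b^{−1/2}; specifically P ~ e^{−K/2 + (τ−1)/(τγ̄_e)} sqrt(τ γ̄_e (1+K)/(2γ̄_b)) · Γ̃(3/2, (τ−1)/(τγ̄_e)), so the secrecy diversity order is 1/2. -/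
open MeasureTheory Real Set Filter

/-- Standard Gaussian CDF. -/
noncomputable def gaussCDF (x : ℝ) : ℝ :=
  ∫ t in Iic x, (1 / Real.sqrt (2 * π)) * Real.exp (-t ^ 2 / 2)

section Helpers

lemma gpdf_integrable : Integrable (fun t : ℝ => (1 / Real.sqrt (2 * π)) * Real.exp (-t ^ 2 / 2)) := by
  have h : Integrable (fun t : ℝ => Real.exp (-(1/2 : ℝ) * t ^ 2)) := integrable_exp_neg_mul_sq (by norm_num)
  have := h.const_mul (1 / Real.sqrt (2 * π))
  convert this using 2 with t
  ring_nf

lemma gpdf_cont : Continuous (fun t : ℝ => (1 / Real.sqrt (2 * π)) * Real.exp (-t ^ 2 / 2)) := by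
  continuity

lemma gaussCDF_hasDerivAt (x : ℝ) :
    HasDerivAt gaussCDF ((1 / Real.sqrt (2 * π)) * Real.exp (-x ^ 2 / 2)) x := by
  have heq : gaussCDF = fun y => gaussCDF 0 + ∫ t in (0:ℝ)..y, (1 / Real.sqrt (2 * π)) * Real.exp (-t ^ 2 / 2) := by
    funext y
    have := intervalIntegral.integral_Iic_sub_Iic
      (f := fun t : ℝ => (1 / Real.sqrt (2 * π)) * Real.exp (-t ^ 2 / 2)) (μ := volume) (a := 0) (b := y)
      gpdf_integrable.integrableOn gpdf_integrable.integrableOn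
    simp only [gaussCDF]
    linarith [this]
  rw [heq]
  exact (intervalIntegral.integral_hasDerivAt_right
      (gpdf_integrable.intervalIntegrable)
      (gpdf_cont.stronglyMeasurableAtFilter _ _)
      (gpdf_cont.continuousAt)).const_add _

lemma gaussCDF_cont : Continuous gaussCDF :=
  continuous_iff_continuousAt.2 fun x => (gaussCDF_hasDerivAt x).continuousAt

lemma gaussCDF_sub_le {a b : ℝ} (hab : a ≤ b) :
    gaussCDF b - gaussCDF a ≤ (b - a) * (1 / Real.sqrt (2 * π)) := by
  have heq : gaussCDF b - gaussCDF a = ∫ t in a..b, (1 / Real.sqrt (2 * π)) * Real.exp (-t ^ 2 / 2) := by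
    have := intervalIntegral.integral_Iic_sub_Iic
      (f := fun t : ℝ => (1 / Real.sqrt (2 * π)) * Real.exp (-t ^ 2 / 2)) (μ := volume) (a := a) (b := b)
      gpdf_integrable.integrableOn gpdf_integrable.integrableOn
    simp only [gaussCDF]; linarith [this]
  rw [heq]
  have hb : ∫ t in a..b, (1 / Real.sqrt (2 * π)) * Real.exp (-t ^ 2 / 2) ≤
      ∫ _t in a..b, (1 / Real.sqrt (2 * π)) := by
    apply intervalIntegral.integral_mono_on hab gpdf_integrable.intervalIntegrable
      (intervalIntegrable_const)
    intro t _
    have : Real.exp (-t ^ 2 / 2) ≤ 1 := by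
      rw [Real.exp_le_one_iff]; nlinarith [sq_nonneg t]
    have hpos : (0:ℝ) < 1 / Real.sqrt (2 * π) := by positivity
    nlinarith
  calc _ ≤ ∫ _t in a..b, (1 / Real.sqrt (2 * π)) := hb
    _ = (b - a) * (1 / Real.sqrt (2 * π)) := by simp; ring

lemma gaussCDF_mono {a b : ℝ} (hab : a ≤ b) : gaussCDF a ≤ gaussCDF b := by
  have heq : gaussCDF b - gaussCDF a = ∫ t in a..b, (1 / Real.sqrt (2 * π)) * Real.exp (-t ^ 2 / 2) := by
    have := intervalIntegral.integral_Iic_sub_Iic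
      (f := fun t : ℝ => (1 / Real.sqrt (2 * π)) * Real.exp (-t ^ 2 / 2)) (μ := volume) (a := a) (b := b)
      gpdf_integrable.integrableOn gpdf_integrable.integrableOn
    simp only [gaussCDF]; linarith [this]
  have h0 : (0:ℝ) ≤ ∫ t in a..b, (1 / Real.sqrt (2 * π)) * Real.exp (-t ^ 2 / 2) :=
    intervalIntegral.integral_nonneg (μ := volume) hab (fun t _ => by positivity)
  linarith

lemma sqrt_tendsto_atTop : Filter.Tendsto Real.sqrt Filter.atTop Filter.atTop := by
  apply Filter.tendsto_atTop_atTop.2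
  intro b
  exact ⟨b ^ 2, fun a ha => by
    have : |b| ≤ Real.sqrt a := by
      rw [← Real.sqrt_sq_eq_abs]; exact Real.sqrt_le_sqrt (by nlinarith [sq_abs b])
    exact le_trans (le_abs_self b) this⟩

lemma slope_limit (a₀ d₀ : ℝ) (hd₀ : 0 < d₀) :
    Tendsto (fun g => Real.sqrt g *
      (gaussCDF (a₀ + d₀ / Real.sqrt g) - gaussCDF (a₀ - d₀ / Real.sqrt g))) atTop
      (nhds (2 * d₀ * ((1 / Real.sqrt (2 * π)) * Real.exp (-a₀ ^ 2 / 2)))) := by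
  set φ := (1 / Real.sqrt (2 * π)) * Real.exp (-a₀ ^ 2 / 2) with hφ
  set D : ℝ → ℝ := fun t => gaussCDF (a₀ + t) - gaussCDF (a₀ - t) with hD
  have h1 : HasDerivAt (fun t : ℝ => gaussCDF (a₀ + t)) φ 0 := by
    have hi : HasDerivAt (fun t : ℝ => a₀ + t) 1 0 := (hasDerivAt_id 0).const_add a₀
    have h : HasDerivAt (fun t : ℝ => gaussCDF (a₀ + t))
        ((1 / Real.sqrt (2 * π)) * Real.exp (-(a₀ + 0) ^ 2 / 2) * 1) 0 :=
      (gaussCDF_hasDerivAt (a₀ + 0)).comp 0 hi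
    rw [add_zero, mul_one] at h
    exact h
  have h2 : HasDerivAt (fun t : ℝ => gaussCDF (a₀ - t)) (-φ) 0 := by
    have hi : HasDerivAt (fun t : ℝ => a₀ - t) (-1) 0 := by
      have := ((hasDerivAt_id (0:ℝ)).neg.const_add a₀)
      simpa [sub_eq_add_neg] using this
    have h : HasDerivAt (fun t : ℝ => gaussCDF (a₀ - t))
        ((1 / Real.sqrt (2 * π)) * Real.exp (-(a₀ - 0) ^ 2 / 2) * (-1)) 0 :=
      (gaussCDF_hasDerivAt (a₀ - 0)).comp 0 hi
    rw [sub_zero, mul_neg_one] at h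
    exact h
  have hDdiff : HasDerivAt D (2 * φ) 0 := by
    have h := h1.sub h2
    have : φ - -φ = 2 * φ := by ring
    rw [this] at h
    exact h
  have hslope : Tendsto (slope D 0) (nhdsWithin 0 {(0:ℝ)}ᶜ) (nhds (2 * φ)) :=
    hasDerivAt_iff_tendsto_slope.1 hDdiff
  have hinner : Tendsto (fun g : ℝ => d₀ / Real.sqrt g) atTop (nhdsWithin 0 {(0:ℝ)}ᶜ) := by
    rw [tendsto_nhdsWithin_iff]
    constructor
    · simpa [div_eq_mul_inv] using (sqrt_tendsto_atTop.inv_tendsto_atTop).const_mul d₀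
    · filter_upwards [eventually_gt_atTop (0:ℝ)] with g hg
      have : 0 < d₀ / Real.sqrt g := by positivity
      simp [ne_of_gt this]
  have hcomp : Tendsto (fun g : ℝ => d₀ * slope D 0 (d₀ / Real.sqrt g)) atTop
      (nhds (d₀ * (2 * φ))) := (hslope.comp hinner).const_mul d₀
  have key : Tendsto (fun g : ℝ => d₀ * slope D 0 (d₀ / Real.sqrt g)) atTop
      (nhds (2 * d₀ * φ)) := by
    convert hcomp using 2; ring
  refine key.congr' ?_
  filter_upwards [eventually_gt_atTop (0:ℝ)] with g hg
  have hsg : (0:ℝ) < Real.sqrt g := Real.sqrt_pos.2 hg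
  have hD0 : D 0 = 0 := by simp [hD]
  rw [slope_def_field]
  simp only [hD0, sub_zero]
  have hDg : D (d₀ / Real.sqrt g) = gaussCDF (a₀ + d₀ / Real.sqrt g) - gaussCDF (a₀ - d₀ / Real.sqrt g) := rfl
  rw [hDg]
  field_simp

lemma arg_rewrite {c K g y : ℝ} (hc : 0 < c) (hK : 0 < K) (hg : 0 < g) (hy : 0 ≤ y) :
    (Real.sqrt (y / c) - Real.sqrt (K * g / (c * (1 + K)))) / Real.sqrt (g / (c * (1 + K)))
      = Real.sqrt ((1 + K) * y) / Real.sqrt g - Real.sqrt K ∧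
    (-Real.sqrt (y / c) - Real.sqrt (K * g / (c * (1 + K)))) / Real.sqrt (g / (c * (1 + K)))
      = -(Real.sqrt ((1 + K) * y) / Real.sqrt g) - Real.sqrt K := by
  have h1K : (0:ℝ) < 1 + K := by linarith
  have hu : (0:ℝ) < g / (c * (1 + K)) := by positivity
  have e1 : Real.sqrt (K * g / (c * (1 + K))) / Real.sqrt (g / (c * (1 + K))) = Real.sqrt K := by
    rw [← Real.sqrt_div (by positivity)]
    congr 1
    field_simp
  have e2 : Real.sqrt (y / c) / Real.sqrt (g / (c * (1 + K)))
      = Real.sqrt ((1 + K) * y) / Real.sqrt g := by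
    rw [← Real.sqrt_div (show (0:ℝ) ≤ y / c by positivity), ← Real.sqrt_div (by positivity : (0:ℝ) ≤ (1 + K) * y)]
    · congr 1
      field_simp
  constructor
  · rw [sub_div, e1, e2]
  · rw [sub_div, neg_div, e1, e2]

lemma my_integral_comp_add_right_Ioi (f : ℝ → ℝ) (c d : ℝ) :
    ∫ x in Ioi c, f (x + d) = ∫ x in Ioi (c + d), f x := by
  rw [← integral_indicator measurableSet_Ioi, ← integral_indicator measurableSet_Ioi]
  have h : (Ioi c).indicator (fun x => f (x + d)) = fun x => (Ioi (c + d)).indicator f (x + d) := by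
    funext x
    by_cases hx : x ∈ Ioi c
    · rw [indicator_of_mem hx, indicator_of_mem (by simpa [mem_Ioi] using add_lt_add_right hx d)]
    · rw [indicator_of_notMem hx, indicator_of_notMem (by
        simp only [mem_Ioi] at hx ⊢; intro h; exact hx (by linarith))]
  rw [h, integral_add_right_eq_self]

variable {gebar τ : ℝ}

lemma change_of_var (hgebar : 0 < gebar) (hτ : 1 < τ) :
    ∫ x in Ioi (0:ℝ), Real.sqrt (τ * x + τ - 1) * ((1 / gebar) * Real.exp (-x / gebar))
      = Real.sqrt (τ * gebar) * Real.exp ((τ - 1) / (τ * gebar)) *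
        ∫ t in Ioi ((τ - 1) / (τ * gebar)), Real.sqrt t * Real.exp (-t) := by
  set a := (τ - 1) / (τ * gebar) with ha
  set h : ℝ → ℝ := fun x => Real.sqrt (τ * x + τ - 1) * ((1 / gebar) * Real.exp (-x / gebar)) with hh
  have step1 : ∫ x in Ioi (0:ℝ), h x = gebar * ∫ u in Ioi (0:ℝ), h (gebar * u) := by
    rw [integral_comp_mul_left_Ioi h 0 hgebar, mul_zero, smul_eq_mul, ← mul_assoc,
      mul_inv_cancel₀ hgebar.ne', one_mul]
  have step2 : (fun u : ℝ => h (gebar * u)) =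
      fun u => (fun t => Real.sqrt (τ * gebar * t) * ((1 / gebar) * Real.exp (-(t - a)))) (u + a) := by
    funext u
    simp only [hh]
    have e1 : τ * (gebar * u) + τ - 1 = τ * gebar * (u + a) := by
      rw [ha]; field_simp; ring
    have e2 : -(gebar * u) / gebar = -((u + a) - a) := by
      field_simp
      ring
    rw [e1, e2]
  have step3 : ∫ u in Ioi (0:ℝ), h (gebar * u)
      = ∫ t in Ioi a, Real.sqrt (τ * gebar * t) * ((1 / gebar) * Real.exp (-(t - a))) := by
    rw [step2, my_integral_comp_add_right_Ioi
      (fun t => Real.sqrt (τ * gebar * t) * ((1 / gebar) * Real.exp (-(t - a)))) 0 a, zero_add]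
  rw [step1, step3]
  have key : ∀ t : ℝ, Real.sqrt (τ * gebar * t) * ((1 / gebar) * Real.exp (-(t - a)))
      = (Real.sqrt (τ * gebar) * (1 / gebar) * Real.exp a) * (Real.sqrt t * Real.exp (-t)) := by
    intro t
    rw [Real.sqrt_mul (by positivity : (0:ℝ) ≤ τ * gebar), show -(t - a) = a + -t by ring,
      Real.exp_add]
    ring
  simp_rw [key]
  rw [integral_const_mul]
  field_simp

lemma sqrt_exp_integrableOn {a : ℝ} (ha : 0 ≤ a) :
    IntegrableOn (fun t : ℝ => Real.sqrt t * Real.exp (-t)) (Ioi a) := by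
  have h := Real.GammaIntegral_convergent (s := 3/2) (by norm_num)
  have h2 : IntegrableOn (fun t : ℝ => Real.sqrt t * Real.exp (-t)) (Ioi 0) := by
    refine (h.congr_fun ?_ measurableSet_Ioi)
    intro t ht
    show Real.exp (-t) * t ^ ((3:ℝ)/2 - 1) = Real.sqrt t * Real.exp (-t)
    rw [show (3:ℝ)/2 - 1 = 1/2 by norm_num, ← Real.sqrt_eq_rpow]
    ring
  exact h2.mono_set (Ioi_subset_Ioi ha)

lemma sqrt_exp_integral_pos {a : ℝ} (ha : 0 ≤ a) :
    0 < ∫ t in Ioi a, Real.sqrt t * Real.exp (-t) := by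
  rw [setIntegral_pos_iff_support_of_nonneg_ae]
  · have hsub : Ioi (max a 1) ⊆ (Function.support fun t => Real.sqrt t * Real.exp (-t)) ∩ Ioi a := by
      intro t ht
      simp only [mem_Ioi, max_lt_iff] at ht
      refine ⟨?_, by simp only [mem_Ioi]; linarith [ht.1]⟩
      simp only [Function.mem_support]
      have h0 : (0:ℝ) < t := by linarith [ht.2]
      exact ne_of_gt (mul_pos (Real.sqrt_pos.2 h0) (Real.exp_pos (-t)))
    refine lt_of_lt_of_le ?_ (measure_mono hsub)
    rw [Real.volume_Ioi]
    simp
  · filter_upwards [ae_restrict_mem measurableSet_Ioi] with t ht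
    have h0 : (0:ℝ) ≤ t := le_of_lt (lt_of_le_of_lt ha ht)
    positivity
  · exact sqrt_exp_integrableOn ha

lemma integrableOn_sqrt_lin_exp (hgebar : 0 < gebar) (hτ : 1 < τ) :
    IntegrableOn (fun x : ℝ => Real.sqrt (τ * x + τ - 1) * ((1 / gebar) * Real.exp (-x / gebar)))
      (Ioi 0) := by
  have h1 : IntegrableOn (fun x : ℝ => x * Real.exp (-(1/gebar) * x)) (Ioi 0) := by
    have := integrableOn_rpow_mul_exp_neg_mul_rpow (s := 1) (p := 1) (b := 1/gebar)
      (by norm_num) (by norm_num) (by positivity)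
    simpa using this
  have h2 : IntegrableOn (fun x : ℝ => Real.exp (-(1/gebar) * x)) (Ioi 0) := by
    have := exp_neg_integrableOn_Ioi 0 (show (0:ℝ) < 1/gebar by positivity)
    simpa using this
  have h3 : IntegrableOn (fun x : ℝ => (x + 1) * Real.exp (-(1/gebar) * x)) (Ioi 0) := by
    have := h1.add h2
    exact this.congr (Filter.Eventually.of_forall fun x => by simp [Pi.add_apply]; ring)
  have h4 := (h3.const_mul (τ / gebar))
  refine Integrable.mono h4 ?_ ?_
  · apply Continuous.aestronglyMeasurable
    continuity
  · filter_upwards [ae_restrict_mem measurableSet_Ioi] with x hx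
    simp only [mem_Ioi] at hx
    have hy : (0:ℝ) ≤ τ * x + τ - 1 := by nlinarith
    have hsle : Real.sqrt (τ * x + τ - 1) ≤ τ * x + τ := by
      nlinarith [Real.sq_sqrt hy, Real.sqrt_nonneg (τ * x + τ - 1),
        sq_nonneg (Real.sqrt (τ * x + τ - 1) - 1)]
    have hexp : Real.exp (-x / gebar) = Real.exp (-(1/gebar) * x) := by
      congr 1; field_simp
    rw [Real.norm_eq_abs, Real.norm_eq_abs]
    rw [abs_of_nonneg (by positivity), abs_of_nonneg (by positivity)]
    rw [hexp]
    have hττ : τ * x + τ ≤ τ * (x + 1) := by nlinarith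
    calc Real.sqrt (τ * x + τ - 1) * (1 / gebar * Real.exp (-(1/gebar) * x))
        ≤ (τ * (x + 1)) * (1 / gebar * Real.exp (-(1/gebar) * x)) := by
          apply mul_le_mul_of_nonneg_right (le_trans hsle hττ) (by positivity)
      _ = τ / gebar * ((x + 1) * Real.exp (-(1/gebar) * x)) := by ring

end Helpers

set_option maxHeartbeats 1000000 in
/-- Asymptotic SOP for a folded-normal legitimate link (`γ_b = cX²`, `X ~ N(μ,σ²)`, with
`K = μ²/σ²` fixed and `γ̄_b = c(μ²+σ²) → ∞`) and an exponential eavesdropper link: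
the SOP is asymptotically `e^{−K/2+(τ−1)/(τγ̄_e)} √(τγ̄_e(1+K)/(2γ̄_b)) Γ̃(3/2, (τ−1)/(τγ̄_e))`,
hence decays as `γ̄_b^{−1/2}` (secrecy diversity order `1/2`). -/
theorem sop_folded_normal_asymptotic
    (c K gebar τ : ℝ) (hc : 0 < c) (hK : 0 < K) (hgebar : 0 < gebar) (hτ : 1 < τ)
    (F : ℝ → ℝ → ℝ)
    (hF : F = fun g y =>
      gaussCDF ((Real.sqrt (y / c) - Real.sqrt (K * g / (c * (1 + K)))) /
          Real.sqrt (g / (c * (1 + K)))) -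
        gaussCDF ((-Real.sqrt (y / c) - Real.sqrt (K * g / (c * (1 + K)))) /
          Real.sqrt (g / (c * (1 + K)))))
    (P : ℝ → ℝ)
    (hP : P = fun g => ∫ x in Ioi (0 : ℝ),
      F g (τ * x + τ - 1) * ((1 / gebar) * Real.exp (-x / gebar)))
    (A : ℝ → ℝ)
    (hA : A = fun g => Real.exp (-K / 2 + (τ - 1) / (τ * gebar)) *
      Real.sqrt (τ * gebar * (1 + K) / (2 * g)) *
        regUpperIncGamma (3 / 2) ((τ - 1) / (τ * gebar))) :
    Tendsto (fun g => P g / A g) atTop (nhds 1) := by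
  have h1K : (0:ℝ) < 1 + K := by linarith
  set a := (τ - 1) / (τ * gebar) with ha
  have hapos : 0 < a := by
    apply div_pos (by linarith) (by positivity)
  set G := ∫ t in Ioi a, Real.sqrt t * Real.exp (-t) with hG
  have hGpos : 0 < G := sqrt_exp_integral_pos hapos.le
  have hΓ : Real.Gamma ((3:ℝ)/2) = Real.sqrt π / 2 := by
    rw [show (3:ℝ)/2 = 1/2 + 1 by norm_num, Real.Gamma_add_one (by norm_num),
      Real.Gamma_one_half_eq]
    ring
  have hreg : regUpperIncGamma (3/2) a = G / (Real.sqrt π / 2) := by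
    have hnum : (∫ t in Ioi a, t ^ ((3:ℝ)/2 - 1) * Real.exp (-t)) = G := by
      refine setIntegral_congr_fun measurableSet_Ioi (fun t ht => ?_)
      have h0 : (0:ℝ) < t := lt_of_le_of_lt hapos.le ht
      rw [show (3:ℝ)/2 - 1 = 1/2 by norm_num, ← Real.sqrt_eq_rpow]
    rw [regUpperIncGamma, hnum, hΓ]
  set C := Real.exp (-K/2 + a) * Real.sqrt (τ * gebar * (1 + K) / 2) * (G / (Real.sqrt π / 2))
    with hC
  have hCpos : 0 < C := by
    have h1 : (0:ℝ) < Real.sqrt (τ * gebar * (1 + K) / 2) := Real.sqrt_pos.2 (by positivity)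
    have h2 : (0:ℝ) < Real.sqrt π := Real.sqrt_pos.2 pi_pos
    positivity
  -- A g = C / √g for g > 0
  have hAeq : ∀ g : ℝ, 0 < g → A g = C / Real.sqrt g := by
    intro g hg
    rw [hA]
    dsimp only
    rw [hreg, (div_div (τ * gebar * (1 + K)) 2 g).symm,
      Real.sqrt_div (by positivity) g, hC]
    ring
  -- the DCT limit
  have hDCT : Tendsto (fun g => ∫ x in Ioi (0:ℝ),
      (Real.sqrt g * F g (τ * x + τ - 1)) * ((1 / gebar) * Real.exp (-x / gebar))) atTop
      (nhds (∫ x in Ioi (0:ℝ),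
        (2 * Real.sqrt ((1 + K) * (τ * x + τ - 1)) * ((1 / Real.sqrt (2 * π)) * Real.exp (-K / 2)))
          * ((1 / gebar) * Real.exp (-x / gebar)))) := by
    apply tendsto_integral_filter_of_dominated_convergence
      (bound := fun x => (2 / Real.sqrt (2 * π) * Real.sqrt (1 + K)) *
        (Real.sqrt (τ * x + τ - 1) * ((1 / gebar) * Real.exp (-x / gebar))))
    · filter_upwards with g
      apply Continuous.aestronglyMeasurable
      rw [hF]
      have hlin : Continuous fun x : ℝ => τ * x + τ - 1 :=
        ((continuous_const.mul continuous_id).add continuous_const).sub continuous_const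
      have hin1 : Continuous fun x : ℝ =>
          (Real.sqrt ((τ * x + τ - 1) / c) - Real.sqrt (K * g / (c * (1 + K)))) /
            Real.sqrt (g / (c * (1 + K))) :=
        ((Real.continuous_sqrt.comp (hlin.div_const c)).sub continuous_const).div_const _
      have hin2 : Continuous fun x : ℝ =>
          (-Real.sqrt ((τ * x + τ - 1) / c) - Real.sqrt (K * g / (c * (1 + K)))) /
            Real.sqrt (g / (c * (1 + K))) :=
        (((Real.continuous_sqrt.comp (hlin.div_const c)).neg).sub continuous_const).div_const _
      have hρc : Continuous fun x : ℝ => (1 / gebar) * Real.exp (-x / gebar) :=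
        continuous_const.mul (Real.continuous_exp.comp (continuous_id.neg.div_const gebar))
      exact (continuous_const.mul
        ((gaussCDF_cont.comp hin1).sub (gaussCDF_cont.comp hin2))).mul hρc
    · filter_upwards [eventually_gt_atTop (0:ℝ)] with g hg
      filter_upwards [ae_restrict_mem measurableSet_Ioi] with x hx
      simp only [mem_Ioi] at hx
      have hy : (0:ℝ) < τ * x + τ - 1 := by nlinarith
      obtain ⟨e1, e2⟩ := arg_rewrite (y := τ * x + τ - 1) hc hK hg hy.le
      have hsg : (0:ℝ) < Real.sqrt g := Real.sqrt_pos.2 hg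
      rw [hF]
      dsimp only
      rw [e1, e2]
      set u := Real.sqrt ((1 + K) * (τ * x + τ - 1)) / Real.sqrt g with hu
      have hu0 : 0 ≤ u := by positivity
      have horder : -u - Real.sqrt K ≤ u - Real.sqrt K := by linarith
      have hF0 : 0 ≤ gaussCDF (u - Real.sqrt K) - gaussCDF (-u - Real.sqrt K) :=
        sub_nonneg.2 (gaussCDF_mono horder)
      have hFle : gaussCDF (u - Real.sqrt K) - gaussCDF (-u - Real.sqrt K)
          ≤ 2 * u * (1 / Real.sqrt (2 * π)) := by
        have := gaussCDF_sub_le horder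
        calc gaussCDF (u - Real.sqrt K) - gaussCDF (-u - Real.sqrt K)
            ≤ ((u - Real.sqrt K) - (-u - Real.sqrt K)) * (1 / Real.sqrt (2 * π)) := this
          _ = 2 * u * (1 / Real.sqrt (2 * π)) := by ring
      have hρ : (0:ℝ) ≤ (1 / gebar) * Real.exp (-x / gebar) := by positivity
      rw [Real.norm_eq_abs, abs_of_nonneg (by positivity)]
      have step : Real.sqrt g * (gaussCDF (u - Real.sqrt K) - gaussCDF (-u - Real.sqrt K))
          ≤ Real.sqrt g * (2 * u * (1 / Real.sqrt (2 * π))) :=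
        mul_le_mul_of_nonneg_left hFle (Real.sqrt_nonneg g)
      have hgu : Real.sqrt g * (2 * u * (1 / Real.sqrt (2 * π)))
          = 2 / Real.sqrt (2 * π) * Real.sqrt (1 + K) * Real.sqrt (τ * x + τ - 1) := by
        rw [hu, Real.sqrt_mul h1K.le]
        field_simp
      calc Real.sqrt g * (gaussCDF (u - Real.sqrt K) - gaussCDF (-u - Real.sqrt K))
            * ((1 / gebar) * Real.exp (-x / gebar))
          ≤ Real.sqrt g * (2 * u * (1 / Real.sqrt (2 * π))) * ((1 / gebar) * Real.exp (-x / gebar)) :=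
            mul_le_mul_of_nonneg_right step hρ
        _ = 2 / Real.sqrt (2 * π) * Real.sqrt (1 + K) *
            (Real.sqrt (τ * x + τ - 1) * ((1 / gebar) * Real.exp (-x / gebar))) := by
            rw [hgu]; ring
    · exact (integrableOn_sqrt_lin_exp hgebar hτ).const_mul _
    · filter_upwards [ae_restrict_mem measurableSet_Ioi] with x hx
      simp only [mem_Ioi] at hx
      have hy : (0:ℝ) < τ * x + τ - 1 := by nlinarith
      set d₀ := Real.sqrt ((1 + K) * (τ * x + τ - 1)) with hd₀
      have hd₀pos : 0 < d₀ := Real.sqrt_pos.2 (by positivity)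
      have hs := (slope_limit (-Real.sqrt K) d₀ hd₀pos).mul_const ((1 / gebar) * Real.exp (-x / gebar))
      have hexp : Real.exp (-(-Real.sqrt K) ^ 2 / 2) = Real.exp (-K / 2) := by
        rw [neg_sq, Real.sq_sqrt hK.le]
      rw [hexp] at hs
      refine hs.congr' ?_
      filter_upwards [eventually_gt_atTop (0:ℝ)] with g hg
      obtain ⟨e1, e2⟩ := arg_rewrite (y := τ * x + τ - 1) hc hK hg hy.le
      rw [hF]
      dsimp only
      rw [e1, e2, show Real.sqrt ((1 + K) * (τ * x + τ - 1)) / Real.sqrt g - Real.sqrt K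
          = -Real.sqrt K + d₀ / Real.sqrt g by rw [hd₀]; ring,
        show -(Real.sqrt ((1 + K) * (τ * x + τ - 1)) / Real.sqrt g) - Real.sqrt K
          = -Real.sqrt K - d₀ / Real.sqrt g by rw [hd₀]; ring]
  -- value of the limit integral
  have hLval : (∫ x in Ioi (0:ℝ),
      (2 * Real.sqrt ((1 + K) * (τ * x + τ - 1)) * ((1 / Real.sqrt (2 * π)) * Real.exp (-K / 2)))
        * ((1 / gebar) * Real.exp (-x / gebar))) = C := by
    have hsplit : ∀ x : ℝ,
        (2 * Real.sqrt ((1 + K) * (τ * x + τ - 1)) * ((1 / Real.sqrt (2 * π)) * Real.exp (-K / 2)))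
          * ((1 / gebar) * Real.exp (-x / gebar))
        = (2 * (1 / Real.sqrt (2 * π)) * Real.exp (-K / 2) * Real.sqrt (1 + K)) *
            (Real.sqrt (τ * x + τ - 1) * ((1 / gebar) * Real.exp (-x / gebar))) := by
      intro x
      rw [Real.sqrt_mul h1K.le]
      ring
    simp_rw [hsplit]
    rw [integral_const_mul, change_of_var hgebar hτ, ← ha, ← hG, hC, Real.exp_add,
      show τ * gebar * (1 + K) / 2 = (τ * gebar * (1 + K)) / 2 by ring,
      Real.sqrt_div (by positivity : (0:ℝ) ≤ τ * gebar * (1 + K)) 2,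
      Real.sqrt_mul (by positivity : (0:ℝ) ≤ τ * gebar) (1 + K),
      Real.sqrt_mul (by norm_num : (0:ℝ) ≤ 2) π]
    have h2 : Real.sqrt 2 ≠ 0 := by positivity
    have hπ : Real.sqrt π ≠ 0 := by
      have := Real.sqrt_pos.2 pi_pos; positivity
    field_simp
  -- assemble
  have hfinal : Tendsto (fun g => P g / A g) atTop (nhds (C / C)) := by
    have hDCT' := hDCT.div_const C
    rw [hLval] at hDCT'
    refine hDCT'.congr' ?_
    filter_upwards [eventually_gt_atTop (0:ℝ)] with g hg
    have hsg : (0:ℝ) < Real.sqrt g := Real.sqrt_pos.2 hg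
    have hmul : ∫ x in Ioi (0:ℝ),
        (Real.sqrt g * F g (τ * x + τ - 1)) * ((1 / gebar) * Real.exp (-x / gebar))
        = Real.sqrt g * P g := by
      rw [hP]
      dsimp only
      rw [← integral_const_mul]
      congr 1
      funext x
      ring
    rw [hmul, hAeq g hg]
    rw [div_div_eq_mul_div]
    ring
  have : C / C = 1 := div_self hCpos.ne'
  rwa [this] at hfinal
end

section
/- Let γ_b ~ Gamma(shape m, mean γ̄_b) and γ_e ~ Exponential(mean γ̄_e) be independent, τ > 1. Then as γ̄_b → ∞, SOP ~ e^{(τ−1)/(τγ̄_e)} (τ m γ̄_e/γ̄_b)^m Γ̃(m+1, (τ−1)/(τγ̄_e)), so the SOP decays as γ̄_b^{−m} (secrecy diversity order m). -/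
open MeasureTheory Real Set Filter

namespace SopAux

lemma intInt (m : ℝ) (hm : 0 < m) (a b : ℝ) :
    IntervalIntegrable (fun t => t ^ (m - 1) * Real.exp (-t)) volume a b :=
  (intervalIntegral.intervalIntegrable_rpow' (by linarith)).mul_continuousOn
    (Continuous.continuousOn (by continuity))

lemma prim_eq (m : ℝ) (hm : 0 < m) {z : ℝ} :
    (∫ t in (0:ℝ)..z, t ^ (m - 1)) = z ^ m / m := by
  have e : m - 1 + 1 = m := by ring
  rw [integral_rpow (Or.inl (by linarith)), e, Real.zero_rpow hm.ne', sub_zero]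

lemma upper_bound (m : ℝ) (hm : 0 < m) {z : ℝ} (hz : 0 ≤ z) :
    (∫ t in (0:ℝ)..z, t ^ (m - 1) * Real.exp (-t)) ≤ z ^ m / m := by
  have h1 : (∫ t in (0:ℝ)..z, t ^ (m - 1) * Real.exp (-t)) ≤ ∫ t in (0:ℝ)..z, t ^ (m - 1) := by
    apply intervalIntegral.integral_mono_on hz (intInt m hm 0 z)
      (intervalIntegral.intervalIntegrable_rpow' (by linarith))
    intro t ht
    have h2 : Real.exp (-t) ≤ 1 := by
      calc Real.exp (-t) ≤ Real.exp 0 := Real.exp_le_exp.mpr (by linarith [ht.1])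
        _ = 1 := Real.exp_zero
    calc t ^ (m - 1) * Real.exp (-t) ≤ t ^ (m - 1) * 1 :=
          mul_le_mul_of_nonneg_left h2 (Real.rpow_nonneg ht.1 _)
      _ = t ^ (m - 1) := mul_one _
  rwa [prim_eq m hm] at h1

lemma lower_bound (m : ℝ) (hm : 0 < m) {z : ℝ} (hz : 0 ≤ z) :
    Real.exp (-z) * (z ^ m / m) ≤ ∫ t in (0:ℝ)..z, t ^ (m - 1) * Real.exp (-t) := by
  have h3 : (∫ t in (0:ℝ)..z, Real.exp (-z) * t ^ (m - 1)) = Real.exp (-z) * (z ^ m / m) := by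
    rw [intervalIntegral.integral_const_mul, prim_eq m hm]
  rw [← h3]
  apply intervalIntegral.integral_mono_on hz
    ((intervalIntegral.intervalIntegrable_rpow' (by linarith)).const_mul _) (intInt m hm 0 z)
  intro t ht
  calc Real.exp (-z) * t ^ (m - 1) ≤ Real.exp (-t) * t ^ (m - 1) :=
        mul_le_mul_of_nonneg_right (Real.exp_le_exp.mpr (by linarith [ht.2])) (Real.rpow_nonneg ht.1 _)
    _ = t ^ (m - 1) * Real.exp (-t) := mul_comm _ _

lemma int_nonneg (m : ℝ) {z : ℝ} (hz : 0 ≤ z) :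
    0 ≤ ∫ t in (0:ℝ)..z, t ^ (m - 1) * Real.exp (-t) :=
  intervalIntegral.integral_nonneg hz
    (fun t ht => mul_nonneg (Real.rpow_nonneg ht.1 _) (Real.exp_nonneg _))

lemma cont_prim (m : ℝ) (hm : 0 < m) :
    Continuous fun z => ∫ t in (0:ℝ)..z, t ^ (m - 1) * Real.exp (-t) :=
  intervalIntegral.continuous_primitive (fun a b => intInt m hm a b) 0

end SopAux

set_option maxHeartbeats 2000000 in
open SopAux in
/-- Asymptotic SOP for a Nakagami-`m` (gamma) legitimate link and exponential
eavesdropper link: as `γ̄_b → ∞`,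
`SOP ~ e^{(τ−1)/(τγ̄_e)} (τ m γ̄_e/γ̄_b)^m Γ̃(m+1, (τ−1)/(τγ̄_e))`, i.e. the SOP decays as
`γ̄_b^{−m}` (secrecy diversity order `m`). -/
theorem sop_gamma_asymptotic
    (m gebar τ : ℝ) (hm : 0 < m) (hgebar : 0 < gebar) (hτ : 1 < τ)
    (P : ℝ → ℝ)
    (hP : P = fun g => ∫ x in Ioi (0 : ℝ),
      regLowerIncGamma m (m * (τ * x + τ - 1) / g) *
        ((1 / gebar) * Real.exp (-x / gebar)))
    (A : ℝ → ℝ)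
    (hA : A = fun g => Real.exp ((τ - 1) / (τ * gebar)) * (τ * m * gebar / g) ^ m *
      regUpperIncGamma (m + 1) ((τ - 1) / (τ * gebar))) :
    Tendsto (fun g => P g / A g) atTop (nhds 1) := by
  have hτ0 : 0 < τ := by linarith
  have hΓm : 0 < Real.Gamma m := Real.Gamma_pos_of_pos hm
  have hΓm1 : 0 < Real.Gamma (m + 1) := Real.Gamma_pos_of_pos (by linarith)
  have hΓ1eq : Real.Gamma (m + 1) = m * Real.Gamma m := Real.Gamma_add_one hm.ne'
  set c : ℝ := (τ - 1) / (τ * gebar) with hc_def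
  have hc : 0 < c := div_pos (by linarith) (by positivity)
  set h : ℝ → ℝ := fun t => t ^ m * Real.exp (-t) with hh
  set I : ℝ := ∫ t in Ioi c, h t with hI_def
  have hint : IntegrableOn h (Ioi c) := by
    have h0 := Real.GammaIntegral_convergent (by linarith : (0:ℝ) < m + 1)
    have h2 : IntegrableOn (fun x : ℝ => Real.exp (-x) * x ^ m) (Ioi 0) := by
      simpa using h0
    exact (h2.mono_set (Ioi_subset_Ioi hc.le)).congr_fun
      (fun x _ => mul_comm _ _) measurableSet_Ioi
  have hI : 0 < I := by
    rw [hI_def, setIntegral_pos_iff_support_of_nonneg_ae ?_ hint]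
    · have hsup : Function.support h ∩ Ioi c = Ioi c := by
        apply inter_eq_right.mpr
        intro t ht
        have ht0 : 0 < t := lt_trans hc ht
        have : 0 < h t := by
          rw [hh]; positivity
        exact ne_of_gt this
      rw [hsup, Real.volume_Ioi]
      simp
    · filter_upwards [ae_restrict_mem measurableSet_Ioi] with t ht
      have ht0 : 0 < t := lt_trans hc ht
      rw [hh]; positivity
  have hτmg : 0 < τ * m * gebar := by positivity
  set C : ℝ := Real.exp c * (τ * m * gebar) ^ m * I / Real.Gamma (m + 1) with hC_def
  have hC : 0 < C := by
    apply div_pos _ hΓm1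
    exact mul_pos (mul_pos (Real.exp_pos _) (Real.rpow_pos_of_pos hτmg m)) hI
  set f0 : ℝ → ℝ := fun x => (m * (τ * x + τ - 1)) ^ m / Real.Gamma (m + 1) *
    ((1 / gebar) * Real.exp (-x / gebar)) with hf0
  have hshift : (fun x : ℝ => x + c) ⁻¹' Ioi c = Ioi 0 := by
    ext x; simp
  have hcomp : EqOn f0 (fun x => (Real.exp c * (τ * m * gebar) ^ m / Real.Gamma (m + 1) * (1 / gebar)) *
      h (gebar⁻¹ * x + c)) (Ioi 0) := by
    intro x hx
    have hx0 : 0 < x := hx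
    have hub : 0 < gebar⁻¹ * x + c := by positivity
    have humul : m * (τ * x + τ - 1) = (τ * m * gebar) * (gebar⁻¹ * x + c) := by
      rw [hc_def]; field_simp; ring
    have hexp : Real.exp (-x / gebar) = Real.exp c * Real.exp (-(gebar⁻¹ * x + c)) := by
      rw [← Real.exp_add]; congr 1; field_simp; ring
    rw [hf0]
    simp only
    rw [humul, Real.mul_rpow hτmg.le hub.le, hexp, hh]
    ring
  have hInt0 : (∫ x in Ioi (0:ℝ), f0 x) = C := by
    rw [setIntegral_congr_fun measurableSet_Ioi hcomp, integral_const_mul]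
    have h1 : (∫ x in Ioi (0:ℝ), h (gebar⁻¹ * x + c)) = gebar * I := by
      have h4 := integral_comp_mul_left_Ioi (fun y => h (y + c)) 0 (inv_pos.mpr hgebar)
      simp only [mul_zero] at h4
      have h2 : (∫ x in Ioi (0:ℝ), h (x + c)) = I := by
        have h3 := (measurePreserving_add_right volume c).setIntegral_preimage_emb
          (measurableEmbedding_addRight c) h (Ioi c)
        rw [hshift] at h3
        exact h3
      rw [h4, h2, smul_eq_mul, inv_inv]
    rw [h1, hC_def]
    field_simp
  have hf0int : IntegrableOn f0 (Ioi 0) := by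
    have h2 : IntegrableOn (fun y => h (y + c)) (Ioi 0) := by
      have h3 := (measurePreserving_add_right volume c).integrableOn_comp_preimage
        (measurableEmbedding_addRight c) (f := h) (s := Ioi c)
      rw [hshift] at h3
      exact h3.mpr hint
    have h1 : IntegrableOn (fun x => h (gebar⁻¹ * x + c)) (Ioi 0) := by
      have h4 := integrableOn_Ioi_comp_mul_left_iff (fun y => h (y + c)) 0 (inv_pos.mpr hgebar)
      simp only [mul_zero] at h4
      exact h4.mpr h2
    have h5 : IntegrableOn (fun x => Real.exp c * (τ * m * gebar) ^ m / Real.Gamma (m + 1) *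
        (1 / gebar) * h (gebar⁻¹ * x + c)) (Ioi 0) := h1.const_mul _
    exact h5.congr_fun (fun x hx => (hcomp hx).symm) measurableSet_Ioi
  -- dominated convergence
  have hkey : Tendsto (fun g => P g * g ^ m) atTop (nhds C) := by
    rw [← hInt0]
    have hdct := MeasureTheory.tendsto_integral_filter_of_dominated_convergence
      (μ := volume.restrict (Ioi (0:ℝ))) (l := atTop) (f := f0)
      (F := fun g x => regLowerIncGamma m (m * (τ * x + τ - 1) / g) *
        ((1 / gebar) * Real.exp (-x / gebar)) * g ^ m) f0
      ?_ ?_ hf0int ?_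
    · apply hdct.congr
      intro g
      rw [hP]
      exact integral_mul_const _ _
    · -- measurability
      apply Eventually.of_forall
      intro g
      apply Continuous.aestronglyMeasurable
      apply Continuous.mul (Continuous.mul ?_ (by continuity)) continuous_const
      unfold regLowerIncGamma
      apply Continuous.div_const
      exact (cont_prim m hm).comp (by continuity)
    · -- bound
      filter_upwards [eventually_gt_atTop (0:ℝ)] with g hg
      filter_upwards [ae_restrict_mem measurableSet_Ioi] with x hx
      have hx0 : 0 < x := hx
      have hu : 0 < τ * x + τ - 1 := by nlinarith
      have hz : 0 ≤ m * (τ * x + τ - 1) / g := by positivity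
      have hwpos : 0 < (1 / gebar) * Real.exp (-x / gebar) := by positivity
      have hFnn : 0 ≤ regLowerIncGamma m (m * (τ * x + τ - 1) / g) *
          ((1 / gebar) * Real.exp (-x / gebar)) * g ^ m := by
        apply mul_nonneg (mul_nonneg _ hwpos.le) (Real.rpow_nonneg hg.le _)
        unfold regLowerIncGamma
        exact div_nonneg (int_nonneg m hz) hΓm.le
      rw [Real.norm_eq_abs, abs_of_nonneg hFnn]
      have hzg : (m * (τ * x + τ - 1) / g) ^ m * g ^ m = (m * (τ * x + τ - 1)) ^ m := by
        rw [Real.div_rpow (by positivity) hg.le,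
          div_mul_cancel₀ _ (Real.rpow_pos_of_pos hg m).ne']
      have hrle : regLowerIncGamma m (m * (τ * x + τ - 1) / g) ≤
          ((m * (τ * x + τ - 1) / g) ^ m / m) / Real.Gamma m := by
        unfold regLowerIncGamma
        gcongr
        exact upper_bound m hm hz
      calc regLowerIncGamma m (m * (τ * x + τ - 1) / g) *
            ((1 / gebar) * Real.exp (-x / gebar)) * g ^ m
          ≤ (((m * (τ * x + τ - 1) / g) ^ m / m) / Real.Gamma m) *
            ((1 / gebar) * Real.exp (-x / gebar)) * g ^ m := by
            gcongr
        _ = f0 x := by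
            rw [hf0]
            simp only
            rw [hΓ1eq, ← hzg]
            ring
    · -- pointwise limit
      filter_upwards [ae_restrict_mem measurableSet_Ioi] with x hx
      have hx0 : 0 < x := hx
      have hu : 0 < τ * x + τ - 1 := by nlinarith
      have hz0 : Tendsto (fun g : ℝ => m * (τ * x + τ - 1) / g) atTop (nhds 0) :=
        Tendsto.div_atTop tendsto_const_nhds tendsto_id
      have hexp1 : Tendsto (fun g : ℝ => Real.exp (-(m * (τ * x + τ - 1) / g))) atTop (nhds 1) := by
        have h5 := (Real.continuous_exp.tendsto 0).comp (show Tendsto (fun g : ℝ => -(m * (τ * x + τ - 1) / g)) atTop (nhds 0) by simpa using hz0.neg)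
        simpa [Function.comp_def] using h5
      have hlow : Tendsto (fun g : ℝ => Real.exp (-(m * (τ * x + τ - 1) / g)) * f0 x)
          atTop (nhds (f0 x)) := by
        simpa using hexp1.mul_const (f0 x)
      apply tendsto_of_tendsto_of_tendsto_of_le_of_le' hlow tendsto_const_nhds
      · filter_upwards [eventually_gt_atTop (0:ℝ)] with g hg
        have hz : 0 ≤ m * (τ * x + τ - 1) / g := by positivity
        have hzg : (m * (τ * x + τ - 1) / g) ^ m * g ^ m = (m * (τ * x + τ - 1)) ^ m := by
          rw [Real.div_rpow (by positivity) hg.le,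
            div_mul_cancel₀ _ (Real.rpow_pos_of_pos hg m).ne']
        have hstep : Real.exp (-(m * (τ * x + τ - 1) / g)) * f0 x =
            (Real.exp (-(m * (τ * x + τ - 1) / g)) *
              ((m * (τ * x + τ - 1) / g) ^ m / m)) / Real.Gamma m *
              ((1 / gebar) * Real.exp (-x / gebar)) * g ^ m := by
          rw [hf0]
          simp only
          rw [hΓ1eq, ← hzg]
          ring
        rw [hstep]
        unfold regLowerIncGamma
        gcongr
        exact lower_bound m hm hz
      · filter_upwards [eventually_gt_atTop (0:ℝ)] with g hg
        have hz : 0 ≤ m * (τ * x + τ - 1) / g := by positivity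
        have hzg : (m * (τ * x + τ - 1) / g) ^ m * g ^ m = (m * (τ * x + τ - 1)) ^ m := by
          rw [Real.div_rpow (by positivity) hg.le,
            div_mul_cancel₀ _ (Real.rpow_pos_of_pos hg m).ne']
        calc regLowerIncGamma m (m * (τ * x + τ - 1) / g) *
              ((1 / gebar) * Real.exp (-x / gebar)) * g ^ m
            ≤ (((m * (τ * x + τ - 1) / g) ^ m / m) / Real.Gamma m) *
              ((1 / gebar) * Real.exp (-x / gebar)) * g ^ m := by
              gcongr
              · unfold regLowerIncGamma
                gcongr
                exact upper_bound m hm hz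
          _ = f0 x := by
              rw [hf0]
              simp only
              rw [hΓ1eq, ← hzg]
              ring
  -- conclude
  have hA' : ∀ᶠ g in atTop, A g = C / g ^ m := by
    filter_upwards [eventually_gt_atTop (0:ℝ)] with g hg
    rw [hA]
    simp only
    unfold regUpperIncGamma
    have he : (∫ t in Ioi c, t ^ (m + 1 - 1) * Real.exp (-t)) = I := by
      rw [hI_def, hh]
      norm_num
    rw [he, Real.div_rpow hτmg.le hg.le, hC_def]
    field_simp
  have hfin : Tendsto (fun g => P g * g ^ m / C) atTop (nhds 1) := by
    have h6 := hkey.div_const C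
    rwa [div_self hC.ne'] at h6
  apply hfin.congr'
  filter_upwards [eventually_gt_atTop (0:ℝ), hA'] with g hg hAg
  conv_rhs => rw [hAg, div_div_eq_mul_div]
end
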